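/- arXiv:2410.19638 — 2 statements merged into one kernel-verified Lean document; each statement's English description precedes it below -/
import Mathlib

section
/- In the barrier construction, for any vertex a on inner cycle C^in_j, any vertex b on C^in_j, and any neighbor c of a not on C^in_j, it holds that dist(a,b) < dist(c,b). Consequently, if every token starts on the same inner cycle as its target, then any swap along an edge of the outer cycle moves both participating tokens strictly farther from their destinations (is not locally optimal). -/
/-- Vertices of the barrier construction: the outer cycle `v_0, ..., v_{pq-1}`
(as `ZMod (p*q)`) together with, for each `j`, the `2q-3` internal vertices of
the inner path `P_j` of `2q-2` edges joining `v_j` and `v_{j+2q}`. -/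
abbrev BV (p q : ℕ) := ZMod (p * q) ⊕ (ZMod (p * q) × Fin (2 * q - 3))

/-- Adjacency of the barrier construction: outer cycle edges, and for each `j`
the inner path `P_j = v_j, (j,0), (j,1), ..., (j,2q-4), v_{j+2q}`. -/
def barrierAdj (p q : ℕ) (a b : BV p q) : Prop :=
  (∃ i : ZMod (p * q), a = Sum.inl i ∧ b = Sum.inl (i + 1)) ∨
  (∃ (j : ZMod (p * q)) (x : Fin (2 * q - 3)), x.val = 0 ∧
    a = Sum.inl j ∧ b = Sum.inr (j, x)) ∨
  (∃ (j : ZMod (p * q)) (x y : Fin (2 * q - 3)), y.val = x.val + 1 ∧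
    a = Sum.inr (j, x) ∧ b = Sum.inr (j, y)) ∨
  (∃ (j : ZMod (p * q)) (x : Fin (2 * q - 3)), x.val = 2 * q - 4 ∧
    a = Sum.inr (j, x) ∧ b = Sum.inl (j + ((2 * q : ℕ) : ZMod (p * q))))

def barrierGraph (p q : ℕ) : SimpleGraph (BV p q) :=
  SimpleGraph.fromRel (barrierAdj p q)

/-- The inner cycle `C^in_j`: the union of the inner paths
`P_j, P_{j+2q}, P_{j+4q}, ...` (including their outer endpoints). -/
def innerCycle (p q : ℕ) (j : ZMod (p * q)) : Set (BV p q) :=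
  {w | ∃ r : ℕ, w = Sum.inl (j + ((2 * q * r : ℕ) : ZMod (p * q))) ∨
      ∃ x : Fin (2 * q - 3), w = Sum.inr (j + ((2 * q * r : ℕ) : ZMod (p * q)), x)}


set_option linter.unusedSectionVars false

namespace B13


lemma cast_val_eq {L : ℕ} [NeZero L] (a : ZMod L) : ((a.val : ℕ) : ZMod L) = a := by
  simp [ZMod.natCast_val, ZMod.cast_id]

lemma val_add_nat {L : ℕ} [NeZero L] (z : ZMod L) (k : ℕ) :
    (z + (k : ZMod L)).val = (z.val + k) % L := by
  have h : z + (k : ZMod L) = ((z.val + k : ℕ) : ZMod L) := by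
    rw [Nat.cast_add, cast_val_eq]
  rw [h, ZMod.val_natCast]

lemma val_add_le' {L : ℕ} [NeZero L] (a b : ZMod L) : (a + b).val ≤ a.val + b.val := by
  have h : a + b = ((a.val + b.val : ℕ) : ZMod L) := by
    rw [Nat.cast_add, cast_val_eq, cast_val_eq]
  rw [h, ZMod.val_natCast]; exact Nat.mod_le _ _

lemma val_sub_of_le {L : ℕ} [NeZero L] {a b : ZMod L} (h : b.val ≤ a.val) :
    (a - b).val = a.val - b.val := by
  have h1 : a - b = ((a.val - b.val : ℕ) : ZMod L) := by
    rw [Nat.cast_sub h, cast_val_eq, cast_val_eq]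
  rw [h1, ZMod.val_natCast, Nat.mod_eq_of_lt]
  exact lt_of_le_of_lt (Nat.sub_le _ _) (ZMod.val_lt a)

/-- distance to 0 on the cycle `ZMod L` -/
def fd {L : ℕ} (z : ZMod L) : ℕ := min z.val (-z).val

lemma fd_neg {L : ℕ} (z : ZMod L) : fd (-z) = fd z := by
  simp [fd, min_comm]

lemma fd_zero {L : ℕ} : fd (0 : ZMod L) = 0 := by simp [fd]

lemma fd_sub_le {L : ℕ} [NeZero L] (z : ZMod L) (k : ℕ) :
    fd (z - (k : ZMod L)) ≤ k + fd z := by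
  have hc : ((k : ZMod L)).val ≤ k := by
    rw [ZMod.val_natCast]; exact Nat.mod_le _ _
  rcases min_cases z.val (-z).val with ⟨he, hle⟩ | ⟨he, hlt⟩
  · -- fd z = z.val
    rcases le_total ((k : ZMod L)).val z.val with h | h
    · have : (z - (k : ZMod L)).val = z.val - ((k : ZMod L)).val := val_sub_of_le h
      calc fd (z - (k : ZMod L)) ≤ (z - (k : ZMod L)).val := min_le_left _ _
        _ ≤ k + fd z := by rw [fd, he, this]; omega
    · have h2 : (-(z - (k : ZMod L))).val = ((k : ZMod L)).val - z.val := by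
        rw [neg_sub]; exact val_sub_of_le h
      calc fd (z - (k : ZMod L)) ≤ (-(z - (k : ZMod L))).val := min_le_right _ _
        _ ≤ k + fd z := by rw [h2]; omega
  · -- fd z = (-z).val
    have h2 : (-(z - (k : ZMod L))) = (k : ZMod L) + (-z) := by ring
    calc fd (z - (k : ZMod L)) ≤ (-(z - (k : ZMod L))).val := min_le_right _ _
      _ ≤ ((k : ZMod L)).val + (-z).val := by rw [h2]; exact val_add_le' _ _
      _ ≤ k + fd z := by rw [fd, he]; omega

lemma fd_add_le {L : ℕ} [NeZero L] (z : ZMod L) (k : ℕ) :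
    fd (z + (k : ZMod L)) ≤ k + fd z := by
  have h : fd (z + (k : ZMod L)) = fd (-z - (k : ZMod L)) := by
    rw [← fd_neg]; congr 1; ring
  rw [h]
  calc fd (-z - (k : ZMod L)) ≤ k + fd (-z) := fd_sub_le _ _
    _ = k + fd z := by rw [fd_neg]

/-- cyclic distance -/
def cd {L : ℕ} (x y : ZMod L) : ℕ := fd (y - x)

lemma cd_self {L : ℕ} (x : ZMod L) : cd x x = 0 := by simp [cd, fd_zero]

/-- moving the base point up by `k` changes `cd` by at most `k` -/
lemma cdL {L : ℕ} [NeZero L] (x y : ZMod L) (k : ℕ) :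
    cd (x + (k : ZMod L)) y ≤ k + cd x y := by
  have h : cd (x + (k : ZMod L)) y = fd ((y - x) - (k : ZMod L)) := by
    unfold cd; congr 1; ring
  rw [h]; exact fd_sub_le _ _

lemma cdR {L : ℕ} [NeZero L] (x y : ZMod L) (k : ℕ) :
    cd x y ≤ k + cd (x + (k : ZMod L)) y := by
  have h : cd x y = fd ((y - (x + (k : ZMod L))) + (k : ZMod L)) := by
    unfold cd; congr 1; ring
  rw [h]
  calc fd ((y - (x + (k : ZMod L))) + (k : ZMod L)) ≤ k + fd (y - (x + (k : ZMod L))) :=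
        fd_add_le _ _
    _ = k + cd (x + (k : ZMod L)) y := rfl


section Coords
variable (p q : ℕ)
def Tc (j i : ZMod (p * q)) : ℕ := (i - j).val % (2 * q)
def Rn (j i : ZMod (p * q)) : ℕ := (i - j).val / (2 * q)
def Rc (j i : ZMod (p * q)) : ZMod (p * (q - 1)) :=
  (((2 * q - 2) * Rn p q j i : ℕ) : ZMod (p * (q - 1)))
end Coords

lemma block_mod {M r y : ℕ} (hy : y < M) : (M * r + y) % M = y := by
  rw [Nat.mul_add_mod, Nat.mod_eq_of_lt hy]
lemma block_div {M r y : ℕ} (hM : 0 < M) (hy : y < M) : (M * r + y) / M = r := by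
  rw [Nat.mul_add_div hM, Nat.div_eq_of_lt hy, add_zero]
lemma succ_mul_aux (a b : ℕ) (hb : 1 ≤ b) : a * (b - 1) + a = a * b := by
  have h1 : a * (b - 1) + a * 1 = a * ((b - 1) + 1) := (Nat.mul_add a _ _).symm
  have h2 : (b - 1) + 1 = b := by omega
  rw [h2] at h1; omega

section Main
variable {p q u : ℕ} (hq : 2 ≤ q) (hu : p = 2 * u) (hu1 : 1 ≤ u)
include hq hu hu1

lemma npos : 0 < p * q := Nat.mul_pos (by omega) (by omega)
lemma Lpos : 0 < p * (q - 1) := Nat.mul_pos (by omega) (by omega)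
lemma hnq : p * q = 2 * q * u := by rw [hu]; ring
lemma hLU : (2 * q - 2) * u = p * (q - 1) := by
  have h : 2 * q - 2 = 2 * (q - 1) := by omega
  rw [h, hu]; ring

lemma coordSucc (j i : ZMod (p * q)) :
    (Tc p q j i < 2 * q - 1 → Tc p q j (i + 1) = Tc p q j i + 1 ∧ Rc p q j (i + 1) = Rc p q j i) ∧
    (Tc p q j i = 2 * q - 1 → Tc p q j (i + 1) = 0 ∧
      Rc p q j (i + 1) = Rc p q j i + ((2 * q - 2 : ℕ) : ZMod (p * (q - 1)))) := by
  haveI : NeZero (p * q) := ⟨(npos hq hu hu1).ne'⟩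
  have hn2 : p * q = 2 * q * u := hnq hq hu hu1
  have hvlt : (i - j).val < p * q := ZMod.val_lt _
  have hsub : i + 1 - j = (i - j) + ((1 : ℕ) : ZMod (p * q)) := by push_cast; ring
  have hval : (i + 1 - j).val = ((i - j).val + 1) % (p * q) := by rw [hsub, val_add_nat]
  have hdm := Nat.div_add_mod (i - j).val (2 * q)
  have hmlt : (i - j).val % (2 * q) < 2 * q := Nat.mod_lt _ (by omega)
  have hBq : 2 * q * (u - 1) + 2 * q = 2 * q * u := succ_mul_aux _ _ hu1
  have htc : Tc p q j i = (i - j).val % (2 * q) := rfl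
  have htc' : Tc p q j (i + 1) = (i + 1 - j).val % (2 * q) := rfl
  have hrc : Rc p q j i = (((2 * q - 2) * ((i - j).val / (2 * q)) : ℕ) : ZMod (p * (q - 1))) := rfl
  have hrc' : Rc p q j (i + 1) =
      (((2 * q - 2) * ((i + 1 - j).val / (2 * q)) : ℕ) : ZMod (p * (q - 1))) := rfl
  constructor
  · intro ht
    rw [htc] at ht
    have hv1 : (i - j).val + 1 = 2 * q * ((i - j).val / (2 * q)) + ((i - j).val % (2 * q) + 1) := by
      omega
    have hvn : (i - j).val + 1 < p * q := by
      rcases Nat.lt_or_ge ((i - j).val + 1) (p * q) with h | h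
      · exact h
      · exfalso
        have hveq : (i - j).val = 2 * q * (u - 1) + (2 * q - 1) := by omega
        have := block_mod (M := 2 * q) (r := u - 1) (y := 2 * q - 1) (by omega)
        rw [← hveq] at this; omega
    refine ⟨?_, ?_⟩
    · rw [htc', hval, Nat.mod_eq_of_lt hvn, hv1, block_mod (by omega), htc]
    · rw [hrc', hval, Nat.mod_eq_of_lt hvn, hv1, block_div (by omega) (by omega), hrc]
  · intro ht
    rw [htc] at ht
    rcases Nat.lt_or_ge ((i - j).val + 1) (p * q) with h | h
    · have hv1 : (i - j).val + 1 = 2 * q * ((i - j).val / (2 * q) + 1) + 0 := by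
        have h1 : 2 * q * ((i - j).val / (2 * q) + 1) =
            2 * q * ((i - j).val / (2 * q)) + 2 * q := by ring
        omega
      refine ⟨?_, ?_⟩
      · rw [htc', hval, Nat.mod_eq_of_lt h, hv1, block_mod (by omega)]
      · rw [hrc', hval, Nat.mod_eq_of_lt h, hv1, block_div (by omega) (by omega), hrc]
        have h1 : (2 * q - 2) * ((i - j).val / (2 * q) + 1) =
            (2 * q - 2) * ((i - j).val / (2 * q)) + (2 * q - 2) := by ring
        rw [h1, Nat.cast_add]
    · -- wrap
      have hveq : (i - j).val = 2 * q * (u - 1) + (2 * q - 1) := by omega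
      have hvd : (i - j).val / (2 * q) = u - 1 := by rw [hveq, block_div (by omega) (by omega)]
      have hval0 : (i + 1 - j).val = 0 := by
        rw [hval, show (i - j).val + 1 = p * q by omega, Nat.mod_self]
      refine ⟨?_, ?_⟩
      · rw [htc', hval0]; simp
      · rw [hrc', hrc, hval0, hvd]
        have h2 : (2 * q - 2) * (u - 1) + (2 * q - 2) = (2 * q - 2) * u := succ_mul_aux _ _ hu1
        rw [← Nat.cast_add, h2, hLU hq hu hu1, ZMod.natCast_self]
        simp

lemma coordShift (j m : ZMod (p * q)) :
    Tc p q j (m + ((2 * q : ℕ) : ZMod (p * q))) = Tc p q j m ∧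
    Rc p q j (m + ((2 * q : ℕ) : ZMod (p * q))) =
      Rc p q j m + ((2 * q - 2 : ℕ) : ZMod (p * (q - 1))) := by
  haveI : NeZero (p * q) := ⟨(npos hq hu hu1).ne'⟩
  have hn2 : p * q = 2 * q * u := hnq hq hu hu1
  have hvlt : (m - j).val < p * q := ZMod.val_lt _
  have hsub : m + ((2 * q : ℕ) : ZMod (p * q)) - j = (m - j) + ((2 * q : ℕ) : ZMod (p * q)) := by
    ring
  have hval : (m + ((2 * q : ℕ) : ZMod (p * q)) - j).val = ((m - j).val + 2 * q) % (p * q) := by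
    rw [hsub, val_add_nat]
  have hdm := Nat.div_add_mod (m - j).val (2 * q)
  have hmlt : (m - j).val % (2 * q) < 2 * q := Nat.mod_lt _ (by omega)
  have hBq : 2 * q * (u - 1) + 2 * q = 2 * q * u := succ_mul_aux _ _ hu1
  have htc : Tc p q j m = (m - j).val % (2 * q) := rfl
  have hrc : Rc p q j m = (((2 * q - 2) * ((m - j).val / (2 * q)) : ℕ) : ZMod (p * (q - 1))) := rfl
  rcases Nat.lt_or_ge ((m - j).val + 2 * q) (p * q) with h | h
  · have hv1 : (m - j).val + 2 * q =
        2 * q * ((m - j).val / (2 * q) + 1) + ((m - j).val % (2 * q)) := by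
      have h1 : 2 * q * ((m - j).val / (2 * q) + 1) =
          2 * q * ((m - j).val / (2 * q)) + 2 * q := by ring
      omega
    refine ⟨?_, ?_⟩
    · show (m + ((2 * q : ℕ) : ZMod (p * q)) - j).val % (2 * q) = _
      rw [hval, Nat.mod_eq_of_lt h, hv1, block_mod (by omega), htc]
    · show (((2 * q - 2) * ((m + ((2 * q : ℕ) : ZMod (p * q)) - j).val / (2 * q)) : ℕ) :
          ZMod (p * (q - 1))) = _
      rw [hval, Nat.mod_eq_of_lt h, hv1, block_div (by omega) (by omega), hrc]
      have h1 : (2 * q - 2) * ((m - j).val / (2 * q) + 1) =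
          (2 * q - 2) * ((m - j).val / (2 * q)) + (2 * q - 2) := by ring
      rw [h1, Nat.cast_add]
  · -- wrap
    have hA : 2 * q * (u - 1) ≤ (m - j).val := by omega
    have hvd : (m - j).val / (2 * q) = u - 1 := by
      have h1 : (u - 1) * (2 * q) = 2 * q * (u - 1) := by ring
      have h2 : ((u - 1) + 1) * (2 * q) = 2 * q * u := by
        rw [show (u - 1) + 1 = u by omega]; ring
      exact Nat.div_eq_of_lt_le (by omega) (by omega)
    rw [hvd] at hdm
    have hw : ((m - j).val + 2 * q) % (p * q) = (m - j).val % (2 * q) := by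
      have h1 : (m - j).val + 2 * q = p * q + (m - j).val % (2 * q) := by omega
      rw [h1, Nat.add_mod_left, Nat.mod_eq_of_lt (by omega)]
    refine ⟨?_, ?_⟩
    · show (m + ((2 * q : ℕ) : ZMod (p * q)) - j).val % (2 * q) = _
      rw [hval, hw, htc, Nat.mod_eq_of_lt hmlt]
    · show (((2 * q - 2) * ((m + ((2 * q : ℕ) : ZMod (p * q)) - j).val / (2 * q)) : ℕ) :
          ZMod (p * (q - 1))) = _
      rw [hval, hw, Nat.div_eq_of_lt hmlt, hrc, hvd]
      have h2 : (2 * q - 2) * (u - 1) + (2 * q - 2) = (2 * q - 2) * u := succ_mul_aux _ _ hu1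
      rw [← Nat.cast_add, h2, hLU hq hu hu1, ZMod.natCast_self]
      simp
end Main

section PhiDef
variable (p q : ℕ)

def Phio (j : ZMod (p * q)) (β : ZMod (p * (q - 1))) (i : ZMod (p * q)) : ℕ :=
  min (Tc p q j i + cd (Rc p q j i) β)
      ((2 * q - Tc p q j i) + cd (Rc p q j i + ((2 * q - 2 : ℕ) : ZMod (p * (q - 1)))) β)

def Phi (j : ZMod (p * q)) (β : ZMod (p * (q - 1))) : BV p q → ℕ
  | Sum.inl i => Phio p q j β i
  | Sum.inr (m, x) =>
      if Tc p q j m = 0 then cd (Rc p q j m + ((x.val + 1 : ℕ) : ZMod (p * (q - 1)))) β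
      else min ((x.val + 1) + Phio p q j β m)
               ((2 * q - 2 - (x.val + 1)) + Phio p q j β (m + ((2 * q : ℕ) : ZMod (p * q))))

lemma Phi_inl (j : ZMod (p * q)) (β : ZMod (p * (q - 1))) (i : ZMod (p * q)) :
    Phi p q j β (Sum.inl i) = Phio p q j β i := rfl

lemma Phi_inr (j : ZMod (p * q)) (β : ZMod (p * (q - 1))) (m : ZMod (p * q))
    (x : Fin (2 * q - 3)) :
    Phi p q j β (Sum.inr (m, x)) =
      if Tc p q j m = 0 then cd (Rc p q j m + ((x.val + 1 : ℕ) : ZMod (p * (q - 1)))) β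
      else min ((x.val + 1) + Phio p q j β m)
               ((2 * q - 2 - (x.val + 1)) + Phio p q j β (m + ((2 * q : ℕ) : ZMod (p * q)))) := rfl

end PhiDef

section Main2
variable {p q u : ℕ} (hq : 2 ≤ q) (hu : p = 2 * u) (hu1 : 1 ≤ u)
include hq hu hu1

lemma Tc_lt (j i : ZMod (p * q)) : Tc p q j i < 2 * q := Nat.mod_lt _ (by omega)

lemma Phio_shift (j : ZMod (p * q)) (β : ZMod (p * (q - 1))) (m : ZMod (p * q)) :
    Phio p q j β m ≤ (2 * q - 2) + Phio p q j β (m + ((2 * q : ℕ) : ZMod (p * q))) ∧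
    Phio p q j β (m + ((2 * q : ℕ) : ZMod (p * q))) ≤ (2 * q - 2) + Phio p q j β m := by
  haveI : NeZero (p * (q - 1)) := ⟨(Lpos hq hu hu1).ne'⟩
  obtain ⟨hT, hR⟩ := coordShift hq hu hu1 j m
  unfold Phio
  rw [hT, hR]
  have h1 := cdR (Rc p q j m) β (2 * q - 2)
  have h2 := cdR (Rc p q j m + ((2 * q - 2 : ℕ) : ZMod (p * (q - 1)))) β (2 * q - 2)
  have h3 := cdL (Rc p q j m) β (2 * q - 2)
  have h4 := cdL (Rc p q j m + ((2 * q - 2 : ℕ) : ZMod (p * (q - 1)))) β (2 * q - 2)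
  omega

lemma phi_step (j : ZMod (p * q)) (β : ZMod (p * (q - 1))) {w₁ w₂ : BV p q}
    (hA : barrierAdj p q w₁ w₂) :
    Phi p q j β w₁ ≤ Phi p q j β w₂ + 1 ∧ Phi p q j β w₂ ≤ Phi p q j β w₁ + 1 := by
  haveI : NeZero (p * (q - 1)) := ⟨(Lpos hq hu hu1).ne'⟩
  rcases hA with ⟨i, h1, h2⟩ | ⟨j₀, x, hx, h1, h2⟩ | ⟨j₀, x, y, hxy, h1, h2⟩ | ⟨j₀, x, hx, h1, h2⟩
  · -- outer edge
    subst h1; subst h2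
    rw [Phi_inl, Phi_inl]
    have hlt := Tc_lt hq hu hu1 j i
    obtain ⟨hc1, hc2⟩ := coordSucc hq hu hu1 j i
    rcases Nat.lt_or_ge (Tc p q j i) (2 * q - 1) with hcase | hcase
    · obtain ⟨hT, hR⟩ := hc1 hcase
      unfold Phio
      rw [hT, hR]
      omega
    · have hTeq : Tc p q j i = 2 * q - 1 := by omega
      obtain ⟨hT, hR⟩ := hc2 hTeq
      unfold Phio
      rw [hT, hR, hTeq]
      have h2 := cdR (Rc p q j i + ((2 * q - 2 : ℕ) : ZMod (p * (q - 1)))) β (2 * q - 2)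
      have h3 := cdL (Rc p q j i) β (2 * q - 2)
      omega
  · -- outer to inner-start
    subst h1; subst h2
    rw [Phi_inl, Phi_inr]
    by_cases hT : Tc p q j j₀ = 0
    · rw [if_pos hT]
      unfold Phio
      rw [hT, hx]
      have h1 := cdR (Rc p q j j₀) β 1
      have h2 := cdL (Rc p q j j₀) β 1
      have h3 := cdR (Rc p q j j₀) β (2 * q - 2)
      have h4 : ((0 + 1 : ℕ) : ZMod (p * (q - 1))) = ((1 : ℕ) : ZMod (p * (q - 1))) := by norm_num
      rw [h4]
      omega
    · rw [if_neg hT, hx]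
      have hs := Phio_shift hq hu hu1 j β j₀
      omega
  · -- inner edge
    subst h1; subst h2
    rw [Phi_inr, Phi_inr]
    have hxlt : y.val < 2 * q - 3 := y.isLt
    by_cases hT : Tc p q j j₀ = 0
    · rw [if_pos hT, if_pos hT, hxy]
      have hcast : ((x.val + 1 + 1 : ℕ) : ZMod (p * (q - 1))) =
          ((x.val + 1 : ℕ) : ZMod (p * (q - 1))) + ((1 : ℕ) : ZMod (p * (q - 1))) := by
        push_cast; ring
      rw [hcast, ← add_assoc]
      have h1 := cdR (Rc p q j j₀ + ((x.val + 1 : ℕ) : ZMod (p * (q - 1)))) β 1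
      have h2 := cdL (Rc p q j j₀ + ((x.val + 1 : ℕ) : ZMod (p * (q - 1)))) β 1
      omega
    · rw [if_neg hT, if_neg hT, hxy]
      omega
  · -- inner-end to outer
    subst h1; subst h2
    rw [Phi_inr, Phi_inl]
    obtain ⟨hTs, hRs⟩ := coordShift hq hu hu1 j j₀
    by_cases hT : Tc p q j j₀ = 0
    · rw [if_pos hT, hx]
      have hc1 : ((2 * q - 4 + 1 : ℕ) : ZMod (p * (q - 1))) =
          ((2 * q - 3 : ℕ) : ZMod (p * (q - 1))) := by
        congr 1; omega
      rw [hc1]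
      unfold Phio
      rw [hTs, hRs, hT]
      have hc2 : Rc p q j j₀ + ((2 * q - 2 : ℕ) : ZMod (p * (q - 1))) =
          Rc p q j j₀ + ((2 * q - 3 : ℕ) : ZMod (p * (q - 1))) + ((1 : ℕ) : ZMod (p * (q - 1))) := by
        rw [add_assoc, ← Nat.cast_add]
        congr 2
        omega
      rw [hc2]
      have h1 := cdR (Rc p q j j₀ + ((2 * q - 3 : ℕ) : ZMod (p * (q - 1)))) β 1
      have h2 := cdL (Rc p q j j₀ + ((2 * q - 3 : ℕ) : ZMod (p * (q - 1)))) β 1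
      have h3 := cdR (Rc p q j j₀ + ((2 * q - 3 : ℕ) : ZMod (p * (q - 1))) +
          ((1 : ℕ) : ZMod (p * (q - 1)))) β (2 * q - 2)
      omega
    · rw [if_neg hT, hx]
      have hs := Phio_shift hq hu hu1 j β j₀
      omega

lemma phi_le_walk (j : ZMod (p * q)) (β : ZMod (p * (q - 1))) {w b : BV p q}
    (W : (barrierGraph p q).Walk w b) :
    Phi p q j β w ≤ W.length + Phi p q j β b := by
  induction W with
  | nil => simp
  | cons h W ih =>
    rw [SimpleGraph.Walk.length_cons]
    have h2 : _ ∧ _ := (SimpleGraph.fromRel_adj _ _ _).mp h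
    rcases h2.2 with hb | hb
    · have := (phi_step hq hu hu1 j β hb).1
      omega
    · have := (phi_step hq hu hu1 j β hb).2
      omega

end Main2

section VertDef
variable (p q : ℕ)

def vert (j : ZMod (p * q)) (s : ZMod (p * (q - 1))) : BV p q :=
  if h : s.val % (2 * q - 2) ≠ 0 ∧ s.val % (2 * q - 2) - 1 < 2 * q - 3 then
    Sum.inr (j + ((2 * q * (s.val / (2 * q - 2)) : ℕ) : ZMod (p * q)),
      ⟨s.val % (2 * q - 2) - 1, h.2⟩)
  else Sum.inl (j + ((2 * q * (s.val / (2 * q - 2)) : ℕ) : ZMod (p * q)))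

def coordOf (j : ZMod (p * q)) : BV p q → ZMod (p * (q - 1))
  | Sum.inl i => Rc p q j i
  | Sum.inr (m, x) => Rc p q j m + ((x.val + 1 : ℕ) : ZMod (p * (q - 1)))

lemma vert_inl_eq (j : ZMod (p * q)) (s : ZMod (p * (q - 1))) (h0 : s.val % (2 * q - 2) = 0) :
    vert p q j s = Sum.inl (j + ((2 * q * (s.val / (2 * q - 2)) : ℕ) : ZMod (p * q))) := by
  unfold vert; rw [dif_neg]; simp [h0]

lemma vert_inr_eq (j : ZMod (p * q)) (s : ZMod (p * (q - 1))) (h0 : s.val % (2 * q - 2) ≠ 0)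
    (hb : s.val % (2 * q - 2) - 1 < 2 * q - 3) :
    vert p q j s = Sum.inr (j + ((2 * q * (s.val / (2 * q - 2)) : ℕ) : ZMod (p * q)),
      ⟨s.val % (2 * q - 2) - 1, hb⟩) := by
  unfold vert; rw [dif_pos ⟨h0, hb⟩]

end VertDef

section Main3
variable {p q u : ℕ} (hq : 2 ≤ q) (hu : p = 2 * u) (hu1 : 1 ≤ u)
include hq hu hu1

lemma vert_adj (j : ZMod (p * q)) (s : ZMod (p * (q - 1))) :
    (barrierGraph p q).Adj (vert p q j s) (vert p q j (s + 1)) := by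
  haveI : NeZero (p * (q - 1)) := ⟨(Lpos hq hu hu1).ne'⟩
  have hL2 : (2 * q - 2) * u = p * (q - 1) := hLU hq hu hu1
  have hsv : s.val < p * (q - 1) := ZMod.val_lt _
  have hy : s.val % (2 * q - 2) < 2 * q - 2 := Nat.mod_lt _ (by omega)
  have hdm := Nat.div_add_mod s.val (2 * q - 2)
  have hmul : (2 * q - 2) * (s.val / (2 * q - 2) + 1) =
      (2 * q - 2) * (s.val / (2 * q - 2)) + (2 * q - 2) := by ring
  have hrlt : s.val / (2 * q - 2) < u := by
    rw [Nat.div_lt_iff_lt_mul (by omega : 0 < 2 * q - 2)]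
    have hcomm : u * (2 * q - 2) = (2 * q - 2) * u := Nat.mul_comm _ _
    omega
  have hmle : (2 * q - 2) * (s.val / (2 * q - 2) + 1) ≤ (2 * q - 2) * u :=
    Nat.mul_le_mul (le_refl _) (by omega)
  have hval1 : (s + 1).val = (s.val + 1) % (p * (q - 1)) := by
    have h1 : (1 : ZMod (p * (q - 1))) = ((1 : ℕ) : ZMod (p * (q - 1))) := by norm_num
    rw [h1, val_add_nat]
  rw [barrierGraph, SimpleGraph.fromRel_adj]
  rcases Nat.lt_or_ge (s.val % (2 * q - 2)) (2 * q - 3) with hyc | hyc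
  · -- stays inside the block
    have hlt : s.val + 1 < p * (q - 1) := by omega
    have hv1 : (s + 1).val = s.val + 1 := by rw [hval1, Nat.mod_eq_of_lt hlt]
    have hm1 : (s + 1).val % (2 * q - 2) = s.val % (2 * q - 2) + 1 := by
      rw [hv1, show s.val + 1 = (2 * q - 2) * (s.val / (2 * q - 2)) + (s.val % (2 * q - 2) + 1)
        by omega, block_mod (by omega)]
    have hd1 : (s + 1).val / (2 * q - 2) = s.val / (2 * q - 2) := by
      rw [hv1, show s.val + 1 = (2 * q - 2) * (s.val / (2 * q - 2)) + (s.val % (2 * q - 2) + 1)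
        by omega, block_div (by omega) (by omega)]
    by_cases h0 : s.val % (2 * q - 2) = 0
    · rw [vert_inl_eq p q j s h0, vert_inr_eq p q j (s + 1) (by omega) (by omega)]
      refine ⟨by simp, Or.inl (Or.inr (Or.inl ?_))⟩
      refine ⟨j + ((2 * q * ((s + 1).val / (2 * q - 2)) : ℕ) : ZMod (p * q)),
        ⟨(s + 1).val % (2 * q - 2) - 1, by omega⟩, by simp only [Fin.val_mk]; omega, ?_, rfl⟩
      rw [hd1]
    · rw [vert_inr_eq p q j s h0 (by omega), vert_inr_eq p q j (s + 1) (by omega) (by omega)]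
      refine ⟨?_, Or.inl (Or.inr (Or.inr (Or.inl ?_)))⟩
      · simp only [ne_eq, Sum.inr.injEq, Prod.mk.injEq, Fin.mk.injEq, not_and]
        intro _; omega
      · refine ⟨j + ((2 * q * ((s + 1).val / (2 * q - 2)) : ℕ) : ZMod (p * q)),
          ⟨s.val % (2 * q - 2) - 1, by omega⟩,
          ⟨(s + 1).val % (2 * q - 2) - 1, by omega⟩, by simp only [Fin.val_mk]; omega, ?_, rfl⟩
        rw [hd1]
  · -- end of block
    have hyeq : s.val % (2 * q - 2) = 2 * q - 3 := by omega
    have hsp1 : s.val + 1 = (2 * q - 2) * (s.val / (2 * q - 2) + 1) := by omega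
    rcases Nat.lt_or_ge (s.val + 1) (p * (q - 1)) with hlt | hge
    · have hv1 : (s + 1).val = s.val + 1 := by rw [hval1, Nat.mod_eq_of_lt hlt]
      have hm1 : (s + 1).val % (2 * q - 2) = 0 := by
        rw [hv1, show s.val + 1 = (2 * q - 2) * (s.val / (2 * q - 2) + 1) + 0 by omega,
          block_mod (by omega)]
      have hd1 : (s + 1).val / (2 * q - 2) = s.val / (2 * q - 2) + 1 := by
        rw [hv1, show s.val + 1 = (2 * q - 2) * (s.val / (2 * q - 2) + 1) + 0 by omega,
          block_div (by omega) (by omega)]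
      rw [vert_inr_eq p q j s (by omega) (by omega), vert_inl_eq p q j (s + 1) hm1]
      refine ⟨by simp, Or.inl (Or.inr (Or.inr (Or.inr ?_)))⟩
      refine ⟨j + ((2 * q * (s.val / (2 * q - 2)) : ℕ) : ZMod (p * q)),
        ⟨s.val % (2 * q - 2) - 1, by omega⟩, by simp only [Fin.val_mk]; omega, rfl, ?_⟩
      rw [hd1]
      have hc : ((2 * q * (s.val / (2 * q - 2) + 1) : ℕ) : ZMod (p * q)) =
          ((2 * q * (s.val / (2 * q - 2)) : ℕ) : ZMod (p * q)) + ((2 * q : ℕ) : ZMod (p * q)) := by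
        push_cast; ring
      rw [hc, ← add_assoc]
    · -- wrap around
      have hveq : s.val + 1 = p * (q - 1) := by omega
      have hv0 : (s + 1).val = 0 := by rw [hval1, hveq, Nat.mod_self]
      have hm1 : (s + 1).val % (2 * q - 2) = 0 := by rw [hv0]; simp
      have hd1 : (s + 1).val / (2 * q - 2) = 0 := by rw [hv0]; simp
      have hru : s.val / (2 * q - 2) + 1 = u := by
        have h1 : (2 * q - 2) * (s.val / (2 * q - 2) + 1) = (2 * q - 2) * u := by omega
        exact Nat.eq_of_mul_eq_mul_left (by omega) h1
      rw [vert_inr_eq p q j s (by omega) (by omega), vert_inl_eq p q j (s + 1) hm1]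
      refine ⟨by simp, Or.inl (Or.inr (Or.inr (Or.inr ?_)))⟩
      refine ⟨j + ((2 * q * (s.val / (2 * q - 2)) : ℕ) : ZMod (p * q)),
        ⟨s.val % (2 * q - 2) - 1, by omega⟩, by simp only [Fin.val_mk]; omega, rfl, ?_⟩
      rw [hd1]
      have hc : ((2 * q * (s.val / (2 * q - 2)) : ℕ) : ZMod (p * q)) + ((2 * q : ℕ) : ZMod (p * q)) =
          ((2 * q * 0 : ℕ) : ZMod (p * q)) := by
        rw [← Nat.cast_add]
        have h1 : 2 * q * (s.val / (2 * q - 2)) + 2 * q = 2 * q * u := by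
          rw [← hru]; ring
        rw [h1, ← hnq hq hu hu1, ZMod.natCast_self]
        simp
      rw [add_assoc, hc]

lemma vert_walk (j : ZMod (p * q)) (s : ZMod (p * (q - 1))) (k : ℕ) :
    ∃ W : (barrierGraph p q).Walk (vert p q j s) (vert p q j (s + (k : ZMod (p * (q - 1))))),
      W.length ≤ k := by
  induction k with
  | zero =>
    rw [show s + ((0 : ℕ) : ZMod (p * (q - 1))) = s by simp]
    exact ⟨SimpleGraph.Walk.nil, by simp⟩
  | succ k ih =>
    obtain ⟨W, hW⟩ := ih
    rw [show s + (((k + 1 : ℕ)) : ZMod (p * (q - 1))) = (s + (k : ZMod (p * (q - 1)))) + 1 by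
      push_cast; ring]
    exact ⟨W.concat (vert_adj hq hu hu1 j (s + (k : ZMod (p * (q - 1))))),
      by rw [SimpleGraph.Walk.length_concat]; omega⟩

lemma mem_inl_iff (j i : ZMod (p * q)) :
    Sum.inl i ∈ innerCycle p q j ↔ Tc p q j i = 0 := by
  haveI : NeZero (p * q) := ⟨(npos hq hu hu1).ne'⟩
  constructor
  · rintro ⟨r, h | ⟨x, h⟩⟩
    · have hi : i = j + ((2 * q * r : ℕ) : ZMod (p * q)) := by
        exact Sum.inl.inj h
      show (i - j).val % (2 * q) = 0
      rw [hi, add_sub_cancel_left, ZMod.val_natCast,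
        Nat.mod_mod_of_dvd _ ⟨u, hnq hq hu hu1⟩, Nat.mul_mod_right]
    · exact absurd h (by simp)
  · intro hT
    have hdm := Nat.div_add_mod (i - j).val (2 * q)
    refine ⟨(i - j).val / (2 * q), Or.inl ?_⟩
    have h1 : ((2 * q * ((i - j).val / (2 * q)) : ℕ) : ZMod (p * q)) = i - j := by
      rw [show 2 * q * ((i - j).val / (2 * q)) = (i - j).val by
        have := hT; unfold Tc at this; omega]
      exact cast_val_eq _
    rw [h1]; ring_nf

lemma mem_inr_iff (j m : ZMod (p * q)) (x : Fin (2 * q - 3)) :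
    Sum.inr (m, x) ∈ innerCycle p q j ↔ Tc p q j m = 0 := by
  haveI : NeZero (p * q) := ⟨(npos hq hu hu1).ne'⟩
  constructor
  · rintro ⟨r, h | ⟨x', h⟩⟩
    · exact absurd h (by simp)
    · have hi : m = j + ((2 * q * r : ℕ) : ZMod (p * q)) := by
        have h2 := Sum.inr.inj h
        exact congrArg Prod.fst h2
      show (m - j).val % (2 * q) = 0
      rw [hi, add_sub_cancel_left, ZMod.val_natCast,
        Nat.mod_mod_of_dvd _ ⟨u, hnq hq hu hu1⟩, Nat.mul_mod_right]
  · intro hT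
    have hdm := Nat.div_add_mod (m - j).val (2 * q)
    refine ⟨(m - j).val / (2 * q), Or.inr ⟨x, ?_⟩⟩
    have h1 : ((2 * q * ((m - j).val / (2 * q)) : ℕ) : ZMod (p * q)) = m - j := by
      rw [show 2 * q * ((m - j).val / (2 * q)) = (m - j).val by
        have := hT; unfold Tc at this; omega]
      exact cast_val_eq _
    rw [h1]
    congr 1
    ring_nf

lemma Rn_lt (j i : ZMod (p * q)) : Rn p q j i < u := by
  haveI : NeZero (p * q) := ⟨(npos hq hu hu1).ne'⟩
  have h1 : (i - j).val < p * q := ZMod.val_lt _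
  have hn2 : p * q = 2 * q * u := hnq hq hu hu1
  unfold Rn
  rw [Nat.div_lt_iff_lt_mul (by omega : 0 < 2 * q)]
  have hcomm : u * (2 * q) = 2 * q * u := Nat.mul_comm _ _
  omega

lemma Rc_val (j i : ZMod (p * q)) :
    (Rc p q j i).val = (2 * q - 2) * Rn p q j i := by
  haveI : NeZero (p * (q - 1)) := ⟨(Lpos hq hu hu1).ne'⟩
  have hrlt : Rn p q j i < u := Rn_lt hq hu hu1 j i
  have hL2 : (2 * q - 2) * u = p * (q - 1) := hLU hq hu hu1
  have hle : (2 * q - 2) * (Rn p q j i + 1) ≤ (2 * q - 2) * u := Nat.mul_le_mul (le_refl _) (by omega)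
  have hmul : (2 * q - 2) * (Rn p q j i + 1) = (2 * q - 2) * Rn p q j i + (2 * q - 2) := by ring
  unfold Rc
  rw [ZMod.val_natCast, Nat.mod_eq_of_lt (by omega)]

lemma vert_coord_inl (j i : ZMod (p * q)) (hT : Tc p q j i = 0) :
    vert p q j (Rc p q j i) = Sum.inl i := by
  haveI : NeZero (p * q) := ⟨(npos hq hu hu1).ne'⟩
  have hval := Rc_val hq hu hu1 j i
  have hm : (Rc p q j i).val % (2 * q - 2) = 0 := by
    rw [hval, show (2 * q - 2) * Rn p q j i = (2 * q - 2) * Rn p q j i + 0 by omega,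
      block_mod (by omega)]
  have hd : (Rc p q j i).val / (2 * q - 2) = Rn p q j i := by
    rw [hval, show (2 * q - 2) * Rn p q j i = (2 * q - 2) * Rn p q j i + 0 by omega,
      block_div (by omega) (by omega)]
  rw [vert_inl_eq _ _ _ _ hm, hd]
  have hdm := Nat.div_add_mod (i - j).val (2 * q)
  have h1 : ((2 * q * Rn p q j i : ℕ) : ZMod (p * q)) = i - j := by
    rw [show 2 * q * Rn p q j i = (i - j).val by
      have := hT; unfold Tc at this; unfold Rn; omega]
    exact cast_val_eq _
  rw [h1]; congr 1; ring

lemma vert_coord_inr (j m : ZMod (p * q)) (x : Fin (2 * q - 3)) (hT : Tc p q j m = 0) :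
    vert p q j (Rc p q j m + ((x.val + 1 : ℕ) : ZMod (p * (q - 1)))) = Sum.inr (m, x) := by
  haveI : NeZero (p * q) := ⟨(npos hq hu hu1).ne'⟩
  haveI : NeZero (p * (q - 1)) := ⟨(Lpos hq hu hu1).ne'⟩
  have hxlt : x.val < 2 * q - 3 := x.isLt
  have hrlt : Rn p q j m < u := Rn_lt hq hu hu1 j m
  have hL2 : (2 * q - 2) * u = p * (q - 1) := hLU hq hu hu1
  have hle : (2 * q - 2) * (Rn p q j m + 1) ≤ (2 * q - 2) * u := Nat.mul_le_mul (le_refl _) (by omega)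
  have hmul : (2 * q - 2) * (Rn p q j m + 1) = (2 * q - 2) * Rn p q j m + (2 * q - 2) := by ring
  have hcast : Rc p q j m + ((x.val + 1 : ℕ) : ZMod (p * (q - 1))) =
      (((2 * q - 2) * Rn p q j m + (x.val + 1) : ℕ) : ZMod (p * (q - 1))) := by
    unfold Rc; push_cast; ring
  have hval : (Rc p q j m + ((x.val + 1 : ℕ) : ZMod (p * (q - 1)))).val =
      (2 * q - 2) * Rn p q j m + (x.val + 1) := by
    rw [hcast, ZMod.val_natCast, Nat.mod_eq_of_lt (by omega)]
  have hm' : (Rc p q j m + ((x.val + 1 : ℕ) : ZMod (p * (q - 1)))).val % (2 * q - 2) =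
      x.val + 1 := by
    rw [hval, block_mod (by omega)]
  have hd' : (Rc p q j m + ((x.val + 1 : ℕ) : ZMod (p * (q - 1)))).val / (2 * q - 2) =
      Rn p q j m := by
    rw [hval, block_div (by omega) (by omega)]
  rw [vert_inr_eq _ _ _ _ (by omega) (by omega)]
  have hdm := Nat.div_add_mod (m - j).val (2 * q)
  have h1 : ((2 * q * ((Rc p q j m + ((x.val + 1 : ℕ) : ZMod (p * (q - 1)))).val / (2 * q - 2)) : ℕ) :
      ZMod (p * q)) = m - j := by
    rw [hd', show 2 * q * Rn p q j m = (m - j).val by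
      have := hT; unfold Tc at this; unfold Rn; omega]
    exact cast_val_eq _
  have hfst : j + (m - j) = m := by ring
  rw [h1, hfst]
  have hsnd : (⟨(Rc p q j m + ((x.val + 1 : ℕ) : ZMod (p * (q - 1)))).val % (2 * q - 2) - 1,
      by omega⟩ : Fin (2 * q - 3)) = x := by
    apply Fin.ext
    show (Rc p q j m + ((x.val + 1 : ℕ) : ZMod (p * (q - 1)))).val % (2 * q - 2) - 1 = x.val
    rw [hm']
    omega
  rw [hsnd]

lemma Phi_coord_zero (j : ZMod (p * q)) (b : BV p q) (hb : b ∈ innerCycle p q j) :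
    Phi p q j (coordOf p q j b) b = 0 := by
  haveI : NeZero (p * (q - 1)) := ⟨(Lpos hq hu hu1).ne'⟩
  cases b with
  | inl i =>
    have hT := (mem_inl_iff hq hu hu1 j i).mp hb
    rw [Phi_inl]
    unfold Phio coordOf
    rw [hT, cd_self]
    simp
  | inr mx =>
    obtain ⟨m, x⟩ := mx
    have hT := (mem_inr_iff hq hu hu1 j m x).mp hb
    rw [Phi_inr, if_pos hT]
    show cd _ (Rc p q j m + ((x.val + 1 : ℕ) : ZMod (p * (q - 1)))) = 0
    exact cd_self _

end Main3

lemma cd_eq {L : ℕ} (x y : ZMod L) : cd x y = min (y - x).val (x - y).val := by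
  unfold cd fd; rw [neg_sub]

section Main4
variable {p q u : ℕ} (hq : 2 ≤ q) (hu : p = 2 * u) (hu1 : 1 ≤ u)
include hq hu hu1

lemma part1 (j : ZMod (p * q)) (a b c : BV p q)
    (ha : a ∈ innerCycle p q j) (hb : b ∈ innerCycle p q j)
    (hadj : (barrierGraph p q).Adj a c) (hc : c ∉ innerCycle p q j) :
    (barrierGraph p q).dist a b < (barrierGraph p q).dist c b := by
  haveI : NeZero (p * q) := ⟨(npos hq hu hu1).ne'⟩
  haveI : NeZero (p * (q - 1)) := ⟨(Lpos hq hu hu1).ne'⟩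
  obtain ⟨k, rfl, hT⟩ : ∃ k, a = Sum.inl k ∧ Tc p q j k = 0 := by
    cases a with
    | inl k => exact ⟨k, rfl, (mem_inl_iff hq hu hu1 j k).mp ha⟩
    | inr mx =>
      obtain ⟨m, x⟩ := mx
      have hTm := (mem_inr_iff hq hu hu1 j m x).mp ha
      exfalso
      have h2 := ((SimpleGraph.fromRel_adj _ _ _).mp hadj).2
      rcases h2 with hd | hd
      · rcases hd with ⟨i, h1, h2⟩ | ⟨j₀, x', hx', h1, h2⟩ |
          ⟨j₀, x', y', hxy, h1, h2⟩ | ⟨j₀, x', hx', h1, h2⟩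
        · exact absurd h1 (by simp)
        · exact absurd h1 (by simp)
        · apply hc
          have hme : m = j₀ := congrArg Prod.fst (Sum.inr.inj h1)
          rw [h2, mem_inr_iff hq hu hu1, ← hme]
          exact hTm
        · apply hc
          have hme : m = j₀ := congrArg Prod.fst (Sum.inr.inj h1)
          rw [h2, mem_inl_iff hq hu hu1]
          have := (coordShift hq hu hu1 j j₀).1
          rw [← hme] at this ⊢
          omega
      · rcases hd with ⟨i, h1, h2⟩ | ⟨j₀, x', hx', h1, h2⟩ |
          ⟨j₀, x', y', hxy, h1, h2⟩ | ⟨j₀, x', hx', h1, h2⟩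
        · exact absurd h2 (by simp)
        · apply hc
          have hme : j₀ = m := (congrArg Prod.fst (Sum.inr.inj h2)).symm
          rw [h1, mem_inl_iff hq hu hu1, hme]
          exact hTm
        · apply hc
          have hme : j₀ = m := (congrArg Prod.fst (Sum.inr.inj h2)).symm
          rw [h1, mem_inr_iff hq hu hu1, hme]
          exact hTm
        · exact absurd h2 (by simp)
  have hclass : c = Sum.inl (k + 1) ∨ ∃ i : ZMod (p * q), c = Sum.inl i ∧ k = i + 1 := by
    have h2 := ((SimpleGraph.fromRel_adj _ _ _).mp hadj).2
    rcases h2 with hd | hd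
    · rcases hd with ⟨i, h1, h2⟩ | ⟨j₀, x', hx', h1, h2⟩ |
        ⟨j₀, x', y', hxy, h1, h2⟩ | ⟨j₀, x', hx', h1, h2⟩
      · left; rw [h2, Sum.inl.inj h1]
      · exfalso; apply hc
        rw [h2, mem_inr_iff hq hu hu1, ← Sum.inl.inj h1]
        exact hT
      · exact absurd h1 (by simp)
      · exact absurd h1 (by simp)
    · rcases hd with ⟨i, h1, h2⟩ | ⟨j₀, x', hx', h1, h2⟩ |
        ⟨j₀, x', y', hxy, h1, h2⟩ | ⟨j₀, x', hx', h1, h2⟩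
      · right; exact ⟨i, h1, Sum.inl.inj h2⟩
      · exact absurd h2 (by simp)
      · exact absurd h2 (by simp)
      · exfalso; apply hc
        have hk : k = j₀ + ((2 * q : ℕ) : ZMod (p * q)) := Sum.inl.inj h2
        have hTj : Tc p q j j₀ = 0 := by
          have := (coordShift hq hu hu1 j j₀).1
          rw [← hk] at this; omega
        rw [h1, mem_inr_iff hq hu hu1]; exact hTj
  set β := coordOf p q j b with hβ
  have hbvert : vert p q j β = b := by
    cases b with
    | inl i => exact vert_coord_inl hq hu hu1 j i ((mem_inl_iff hq hu hu1 j i).mp hb)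
    | inr mx =>
      obtain ⟨m, x⟩ := mx
      exact vert_coord_inr hq hu hu1 j m x ((mem_inr_iff hq hu hu1 j m x).mp hb)
  have hbzero : Phi p q j β b = 0 := Phi_coord_zero hq hu hu1 j b hb
  have havert : vert p q j (Rc p q j k) = Sum.inl k := vert_coord_inl hq hu hu1 j k hT
  have hend1 : Rc p q j k + (((β - Rc p q j k).val : ℕ) : ZMod (p * (q - 1))) = β := by
    rw [cast_val_eq]; ring
  have hend2 : β + (((Rc p q j k - β).val : ℕ) : ZMod (p * (q - 1))) = Rc p q j k := by
    rw [cast_val_eq]; ring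
  have hd1 : (barrierGraph p q).dist (Sum.inl k) b ≤ (β - Rc p q j k).val := by
    obtain ⟨W, hW⟩ := vert_walk hq hu hu1 j (Rc p q j k) ((β - Rc p q j k).val)
    have h2 := le_trans (SimpleGraph.dist_le W) hW
    rw [hend1, havert, hbvert] at h2
    exact h2
  have hd2 : (barrierGraph p q).dist b (Sum.inl k) ≤ (Rc p q j k - β).val := by
    obtain ⟨W, hW⟩ := vert_walk hq hu hu1 j β ((Rc p q j k - β).val)
    have h2 := le_trans (SimpleGraph.dist_le W) hW
    rw [hend2, havert, hbvert] at h2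
    exact h2
  have hdab : (barrierGraph p q).dist (Sum.inl k) b ≤ cd (Rc p q j k) β := by
    rw [cd_eq]
    exact le_min hd1 (by rw [SimpleGraph.dist_comm]; exact hd2)
  have hreach : (barrierGraph p q).Reachable c b := by
    obtain ⟨W, _⟩ := vert_walk hq hu hu1 j (Rc p q j k) ((β - Rc p q j k).val)
    have h1 := W.reachable
    rw [hend1, havert, hbvert] at h1
    exact (hadj.symm.reachable).trans h1
  obtain ⟨Wc, hWc⟩ := hreach.exists_walk_length_eq_dist
  have hphic : Phi p q j β c ≤ (barrierGraph p q).dist c b := by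
    have h2 := phi_le_walk hq hu hu1 j β Wc
    rw [hWc] at h2
    omega
  have hlow : cd (Rc p q j k) β + 1 ≤ Phi p q j β c := by
    rcases hclass with hcl | ⟨i, hcl, hki⟩
    · subst hcl
      obtain ⟨hT1, hR1⟩ := (coordSucc hq hu hu1 j k).1 (by omega)
      rw [Phi_inl]
      unfold Phio
      rw [hT1, hR1, hT]
      have h1 := cdR (Rc p q j k) β (2 * q - 2)
      omega
    · subst hcl
      have hTi : Tc p q j i = 2 * q - 1 := by
        have hlt := Tc_lt hq hu hu1 j i
        rcases Nat.lt_or_ge (Tc p q j i) (2 * q - 1) with h | h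
        · obtain ⟨hT1, _⟩ := (coordSucc hq hu hu1 j i).1 h
          rw [← hki] at hT1
          omega
        · omega
      obtain ⟨hT1, hR1⟩ := (coordSucc hq hu hu1 j i).2 hTi
      rw [← hki] at hR1
      rw [Phi_inl]
      unfold Phio
      rw [hTi, hR1]
      have h1 := cdL (Rc p q j i) β (2 * q - 2)
      omega
  omega

end Main4

end B13

/-- (1) For `a, b` on the same inner cycle and `c` a neighbor of `a` not on
that inner cycle, `dist(a,b) < dist(c,b)`. (2) Consequently, if every token
lies on the same inner cycle as its target, then a swap along any outer-cycle
edge `(v_m, v_{m+1})` moves both participating tokens strictly farther from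
their destinations (i.e. it is not locally optimal). -/
theorem stmt13 (p q : ℕ) (hp : Even p) (hp2 : 2 ≤ p) (hq : 2 ≤ q) :
    (∀ (j : ZMod (p * q)) (a b c : BV p q),
      a ∈ innerCycle p q j → b ∈ innerCycle p q j →
      (barrierGraph p q).Adj a c → c ∉ innerCycle p q j →
      (barrierGraph p q).dist a b < (barrierGraph p q).dist c b) ∧
    (∀ (T : Type) (f tgt : T ≃ BV p q),
      (∀ t : T, ∃ j : ZMod (p * q),
        f t ∈ innerCycle p q j ∧ tgt t ∈ innerCycle p q j) →
      ∀ m : ZMod (p * q),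
        (barrierGraph p q).dist (Sum.inl m) (tgt (f.symm (Sum.inl m))) <
          (barrierGraph p q).dist (Sum.inl (m + 1)) (tgt (f.symm (Sum.inl m))) ∧
        (barrierGraph p q).dist (Sum.inl (m + 1)) (tgt (f.symm (Sum.inl (m + 1)))) <
          (barrierGraph p q).dist (Sum.inl m) (tgt (f.symm (Sum.inl (m + 1))))) := by
  obtain ⟨u, hpu⟩ := hp
  have hu : p = 2 * u := by omega
  have hu1 : 1 ≤ u := by omega
  haveI : NeZero (p * q) := ⟨(B13.npos hq hu hu1).ne'⟩
  haveI : Fact (1 < p * q) := ⟨by have := Nat.mul_le_mul hp2 hq; omega⟩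
  constructor
  · intro j a b c ha hb hadj hc
    exact B13.part1 hq hu hu1 j a b c ha hb hadj hc
  · intro T f tgt htok m
    have hne : (Sum.inl m : BV p q) ≠ Sum.inl (m + 1) := by
      simp only [ne_eq, Sum.inl.injEq]
      intro h
      have h2 : (1 : ZMod (p * q)) = 0 := by
        have h3 := congrArg (fun z => z - m) h
        simpa using h3.symm
      exact one_ne_zero h2
    have hadj1 : (barrierGraph p q).Adj (Sum.inl m) (Sum.inl (m + 1)) := by
      rw [barrierGraph, SimpleGraph.fromRel_adj]
      exact ⟨hne, Or.inl (Or.inl ⟨m, rfl, rfl⟩)⟩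
    constructor
    · obtain ⟨j, hf, ht⟩ := htok (f.symm (Sum.inl m))
      rw [Equiv.apply_symm_apply] at hf
      have hTm : B13.Tc p q j m = 0 := (B13.mem_inl_iff hq hu hu1 j m).mp hf
      have hnotc : (Sum.inl (m + 1) : BV p q) ∉ innerCycle p q j := by
        rw [B13.mem_inl_iff hq hu hu1]
        obtain ⟨hT1, _⟩ := (B13.coordSucc hq hu hu1 j m).1 (by omega)
        omega
      exact B13.part1 hq hu hu1 j (Sum.inl m) _ (Sum.inl (m + 1)) hf ht hadj1 hnotc
    · obtain ⟨j, hf, ht⟩ := htok (f.symm (Sum.inl (m + 1)))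
      rw [Equiv.apply_symm_apply] at hf
      have hnotc : (Sum.inl m : BV p q) ∉ innerCycle p q j := by
        rw [B13.mem_inl_iff hq hu hu1]
        intro hTm
        have hT1 : B13.Tc p q j (m + 1) = 0 := (B13.mem_inl_iff hq hu hu1 j (m + 1)).mp hf
        obtain ⟨hT2, _⟩ := (B13.coordSucc hq hu hu1 j m).1 (by omega)
        omega
      exact B13.part1 hq hu hu1 j (Sum.inl (m + 1)) _ (Sum.inl m) hf ht hadj1.symm hnotc
end

section
/- Consider a cycle of length p(q−1) containing p/2 special vertices evenly spaced, each carrying a token whose target is the next special vertex 2q−2 steps clockwise, with all other tokens wanting to stay put. Then any solving swap sequence (using only edges of this cycle) has length greater than 2pq − 5p/2 − 4q. -/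
/-- Apply a list of swaps to a configuration `f : T ≃ V`. -/
noncomputable def applySwaps {V T : Type*} (f : T ≃ V) (s : List (V × V)) : T ≃ V :=
  letI := Classical.decEq V
  s.foldl (fun g e => g.trans (Equiv.swap e.1 e.2)) f

/-- The cycle graph on `ZMod n`: `v` adjacent to `v + 1`. -/
def cycleG (n : ℕ) : SimpleGraph (ZMod n) :=
  SimpleGraph.fromRel (fun a b => b = a + 1)

section EdivAux

lemma ediv_succ_of_not_dvd {n D : ℤ} (hn : 0 < n) (h : ¬ n ∣ D + 1) : (D + 1) / n = D / n := by
  have h2 : 0 ≤ D % n := Int.emod_nonneg D (ne_of_gt hn)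
  have h3 : D % n < n := Int.emod_lt_of_pos D hn
  have hmd := Int.emod_add_mul_ediv D n
  have h1 : D % n + 1 < n := by
    rcases lt_or_eq_of_le (Int.add_one_le_iff.mpr h3) with h' | h'
    · exact h'
    · exact absurd ⟨D / n + 1, by linarith [mul_add n (D/n) 1]⟩ h
  have key : D + 1 = (D % n + 1) + n * (D / n) := by linarith
  rw [key, Int.add_mul_ediv_left _ _ (ne_of_gt hn),
    Int.ediv_eq_zero_of_lt (by linarith) h1, zero_add]

lemma ediv_shift_le_one {n : ℤ} (D k : ℤ) (hn : 0 < n) (hk : |k| ≤ n) :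
    |(D + k) / n - D / n| ≤ 1 := by
  have hk' := abs_le.1 hk
  have e1 : (D + n) / n = D / n + 1 := by
    have := Int.add_mul_ediv_left D (1:ℤ) (ne_of_gt hn); simpa using this
  have e2 : (D - n) / n = D / n - 1 := by
    have := Int.add_mul_ediv_left D (-1:ℤ) (ne_of_gt hn)
    simp only [mul_neg, mul_one] at this
    rw [sub_eq_add_neg, sub_eq_add_neg, ← this]
  have up : (D + k) / n ≤ D / n + 1 := by
    rw [← e1]; exact Int.ediv_le_ediv hn (by linarith)
  have dn : D / n - 1 ≤ (D + k) / n := by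
    rw [← e2]; exact Int.ediv_le_ediv hn (by linarith)
  rw [abs_le]; constructor <;> linarith

lemma ediv_zero_of_lt {n D : ℤ} (h0 : 0 ≤ D) (h1 : D < n) : D / n = 0 :=
  Int.ediv_eq_zero_of_lt h0 h1

lemma ediv_neg_one {n D : ℤ} (h0 : -n ≤ D) (h1 : D < 0) : D / n = -1 := by
  have hn : 0 < n := by linarith
  have : (D + n) / n = D / n + 1 := by
    have := Int.add_mul_ediv_left D (1:ℤ) (ne_of_gt hn); simpa using this
  have z : (D + n) / n = 0 := Int.ediv_eq_zero_of_lt (by linarith) (by linarith)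
  omega

end EdivAux

section Lift

variable {n : ℕ}

def dsw (e : ZMod n × ZMod n) : ℤ := if e.2 = e.1 + 1 then 1 else -1

def dlt (e : ZMod n × ZMod n) (v : ZMod n) : ℤ :=
  if v = e.1 then dsw e else if v = e.2 then - dsw e else 0

def stepL (ℓ : ZMod n → ℤ) (e : ZMod n × ZMod n) : ZMod n → ℤ :=
  fun t => ℓ t + dlt e ((ℓ t : ZMod n))

def P2 (n : ℕ) [NeZero n] : Finset (ZMod n × ZMod n) :=
  Finset.univ.filter (fun p => p.2.val < p.1.val)

def flr (n : ℕ) (ℓ : ZMod n → ℤ) (p : ZMod n × ZMod n) : ℤ := (ℓ p.1 - ℓ p.2) / (n : ℤ)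

lemma applySwaps_cons {V T : Type*} (f : T ≃ V) (e : V × V) (s : List (V × V)) :
    applySwaps f (e :: s) = applySwaps (applySwaps f [e]) s := by
  unfold applySwaps; rfl

lemma applySwaps_single_apply {V T : Type*} [DecidableEq V] (f : T ≃ V) (e : V × V) (t : T) :
    applySwaps f [e] t = Equiv.swap e.1 e.2 (f t) := by
  unfold applySwaps
  simp only [List.foldl, Equiv.trans_apply]
  simp only [Equiv.swap_apply_def]
  split_ifs <;> rfl

lemma applySwaps_nil {V T : Type*} (f : T ≃ V) : applySwaps f [] = f := rfl

lemma dsw_cases (e : ZMod n × ZMod n) : dsw e = 1 ∨ dsw e = -1 := by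
  unfold dsw; split_ifs <;> simp

lemma dlt_cases (e : ZMod n × ZMod n) (v : ZMod n) : dlt e v = 1 ∨ dlt e v = 0 ∨ dlt e v = -1 := by
  unfold dlt; rcases dsw_cases e with h | h <;> split_ifs <;> simp [h]

lemma dlt_ne_zero (e : ZMod n × ZMod n) (v : ZMod n) (h : dlt e v ≠ 0) : v = e.1 ∨ v = e.2 := by
  unfold dlt at h; split_ifs at h with h1 h2
  · exact Or.inl h1
  · exact Or.inr h2
  · exact absurd rfl h

lemma stepL_cast [NeZero n] {e : ZMod n × ZMod n} (hadj : (cycleG n).Adj e.1 e.2)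
    (g : Equiv.Perm (ZMod n)) (ℓ : ZMod n → ℤ) (hc : ∀ t, ((ℓ t : ℤ) : ZMod n) = g t) (t : ZMod n) :
    ((stepL ℓ e t : ℤ) : ZMod n) = Equiv.swap e.1 e.2 (g t) := by
  obtain ⟨hne, hor⟩ := (SimpleGraph.fromRel_adj _ _ _).1 hadj
  have hor' : e.2 = e.1 + 1 ∨ e.1 = e.2 + 1 := hor
  unfold stepL dlt dsw
  rw [hc t]
  push_cast
  rw [hc t]
  by_cases h1 : g t = e.1
  · rw [if_pos h1, h1, Equiv.swap_apply_left]
    by_cases hd : e.2 = e.1 + 1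
    · rw [if_pos hd, hd]; try (push_cast; ring)
    · rw [if_neg hd]
      rcases hor' with h | h
      · exact absurd h hd
      · rw [h]; try (push_cast; ring)
  · rw [if_neg h1]
    by_cases h2 : g t = e.2
    · rw [if_pos h2, h2, Equiv.swap_apply_right]
      by_cases hd : e.2 = e.1 + 1
      · rw [if_pos hd, hd]; try (push_cast; ring)
      · rw [if_neg hd]
        rcases hor' with h | h
        · exact absurd h hd
        · rw [h]; try (push_cast; ring)
    · rw [if_neg h2, Equiv.swap_apply_of_ne_of_ne h1 h2]; push_cast; ring

lemma stepL_sum [NeZero n] {e : ZMod n × ZMod n} (hne : e.1 ≠ e.2)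
    (g : Equiv.Perm (ZMod n)) (ℓ : ZMod n → ℤ) (hc : ∀ t, ((ℓ t : ℤ) : ZMod n) = g t) :
    ∑ t, stepL ℓ e t = ∑ t, ℓ t := by
  have hs : ∀ t, stepL ℓ e t = ℓ t + dlt e (g t) := by
    intro t; unfold stepL; rw [hc t]
  rw [Finset.sum_congr rfl (fun t _ => hs t), Finset.sum_add_distrib]
  have : ∑ t, dlt e (g t) = ∑ v, dlt e v := Equiv.sum_comp g (dlt e)
  rw [this]
  have hsplit : ∀ v, dlt e v = (if v = e.1 then dsw e else 0) + (if v = e.2 then -dsw e else 0) := by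
    intro v; unfold dlt; split_ifs with h1 h2 h3 <;> simp_all
  rw [Finset.sum_congr rfl (fun v _ => hsplit v), Finset.sum_add_distrib]
  simp [Finset.sum_ite_eq']

end Lift

section Pairs
variable {n : ℕ}

lemma stepL_pairs [NeZero n] (hn2 : 2 ≤ n) {e : ZMod n × ZMod n}
    (hadj : (cycleG n).Adj e.1 e.2)
    (g : Equiv.Perm (ZMod n)) (ℓ : ZMod n → ℤ) (hc : ∀ t, ((ℓ t : ℤ) : ZMod n) = g t) :
    ∑ p ∈ P2 n, |flr n (stepL ℓ e) p - flr n ℓ p| ≤ 1 := by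
  obtain ⟨hne, -⟩ := (SimpleGraph.fromRel_adj _ _ _).1 hadj
  have hnz : (0:ℤ) < (n:ℤ) := by exact_mod_cast Nat.lt_of_lt_of_le two_pos hn2
  have hc' : ∀ t, ((stepL ℓ e t : ℤ) : ZMod n) = Equiv.swap e.1 e.2 (g t) :=
    stepL_cast hadj g ℓ hc
  set p₀ : ZMod n × ZMod n :=
    if (g.symm e.2).val < (g.symm e.1).val then (g.symm e.1, g.symm e.2)
    else (g.symm e.2, g.symm e.1) with hp₀
  have key : ∀ p ∈ P2 n, |flr n (stepL ℓ e) p - flr n ℓ p| ≤ if p = p₀ then 1 else 0 := by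
    intro p hp
    have hplt : p.2.val < p.1.val := (Finset.mem_filter.1 hp).2
    have hp12 : p.1 ≠ p.2 := fun h => by rw [h] at hplt; exact lt_irrefl _ hplt
    have hD1 : stepL ℓ e p.1 = ℓ p.1 + dlt e (g p.1) := by unfold stepL; rw [hc]
    have hD2 : stepL ℓ e p.2 = ℓ p.2 + dlt e (g p.2) := by unfold stepL; rw [hc]
    set D : ℤ := ℓ p.1 - ℓ p.2 with hD
    have hflr : flr n ℓ p = D / (n:ℤ) := rfl
    have hflr' : flr n (stepL ℓ e) p = (D + (dlt e (g p.1) - dlt e (g p.2))) / (n:ℤ) := by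
      unfold flr; rw [hD1, hD2]; congr 1; rw [hD]; ring
    by_cases hcrit : (g p.1 = e.1 ∧ g p.2 = e.2) ∨ (g p.1 = e.2 ∧ g p.2 = e.1)
    · have hpp : p = p₀ := by
        rcases hcrit with ⟨h1, h2⟩ | ⟨h1, h2⟩
        · have e1 : g.symm e.1 = p.1 := by rw [← h1, Equiv.symm_apply_apply]
          have e2 : g.symm e.2 = p.2 := by rw [← h2, Equiv.symm_apply_apply]
          rw [hp₀, e1, e2, if_pos hplt]
        · have e1 : g.symm e.2 = p.1 := by rw [← h1, Equiv.symm_apply_apply]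
          have e2 : g.symm e.1 = p.2 := by rw [← h2, Equiv.symm_apply_apply]
          rw [hp₀, e1, e2, if_neg (by omega)]
      rw [if_pos hpp, hflr, hflr']
      have hk : |dlt e (g p.1) - dlt e (g p.2)| ≤ (n:ℤ) := by
        rcases hcrit with ⟨h1, h2⟩ | ⟨h1, h2⟩ <;> rw [h1, h2] <;>
          · unfold dlt
            rcases dsw_cases e with h | h <;>
              simp [hne, Ne.symm hne, h] <;> omega
      exact ediv_shift_le_one D _ hnz hk
    · have hzero : dlt e (g p.1) = 0 ∨ dlt e (g p.2) = 0 := by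
        by_contra hcon
        push_neg at hcon
        have h1 := dlt_ne_zero e (g p.1) hcon.1
        have h2 := dlt_ne_zero e (g p.2) hcon.2
        have hgg : g p.1 ≠ g p.2 := fun h => hp12 (g.injective h)
        rcases h1 with h1 | h1 <;> rcases h2 with h2 | h2
        · exact hgg (h1.trans h2.symm)
        · exact hcrit (Or.inl ⟨h1, h2⟩)
        · exact hcrit (Or.inr ⟨h1, h2⟩)
        · exact hgg (h1.trans h2.symm)
      have hcastD : ((D : ℤ) : ZMod n) ≠ 0 := by
        have : ((D : ℤ) : ZMod n) = g p.1 - g p.2 := by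
          rw [hD]; push_cast; rw [hc, hc]
        rw [this, sub_ne_zero]
        exact fun h => hp12 (g.injective h)
      have hcastD' : ((D + (dlt e (g p.1) - dlt e (g p.2)) : ℤ) : ZMod n) ≠ 0 := by
        have : ((D + (dlt e (g p.1) - dlt e (g p.2)) : ℤ) : ZMod n)
            = Equiv.swap e.1 e.2 (g p.1) - Equiv.swap e.1 e.2 (g p.2) := by
          have r1 : (((ℓ p.1 + dlt e (g p.1) : ℤ)) : ZMod n) = Equiv.swap e.1 e.2 (g p.1) := by
            rw [← hD1]; exact hc' p.1
          have r2 : (((ℓ p.2 + dlt e (g p.2) : ℤ)) : ZMod n) = Equiv.swap e.1 e.2 (g p.2) := by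
            rw [← hD2]; exact hc' p.2
          rw [hD]; push_cast at r1 r2 ⊢; rw [← r1, ← r2]; ring
        rw [this, sub_ne_zero]
        exact fun h => hp12 (g.injective ((Equiv.swap e.1 e.2).injective h))
      have heq : flr n (stepL ℓ e) p = flr n ℓ p := by
        rw [hflr, hflr']
        have hd1 := dlt_cases e (g p.1)
        have hd2 := dlt_cases e (g p.2)
        have hΔ : dlt e (g p.1) - dlt e (g p.2) = 0 ∨ dlt e (g p.1) - dlt e (g p.2) = 1
            ∨ dlt e (g p.1) - dlt e (g p.2) = -1 := by omega
        rcases hΔ with h | h | h <;> rw [h]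
        · ring_nf
        · have : ¬ (n:ℤ) ∣ D + 1 := by
            intro hdvd
            apply hcastD'
            rw [h]
            exact (ZMod.intCast_zmod_eq_zero_iff_dvd _ _).2 hdvd
          exact ediv_succ_of_not_dvd hnz this
        · have : ¬ (n:ℤ) ∣ (D + -1) + 1 := by
            intro hdvd
            apply hcastD
            have : D = (D + -1) + 1 := by ring
            rw [this]
            exact (ZMod.intCast_zmod_eq_zero_iff_dvd _ _).2 hdvd
          have := ediv_succ_of_not_dvd hnz this
          have h3 : D + -1 + 1 = D := by ring
          rw [h3] at this
          exact this.symm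
      rw [heq, sub_self, abs_zero]
      split <;> norm_num
  calc ∑ p ∈ P2 n, |flr n (stepL ℓ e) p - flr n ℓ p|
      ≤ ∑ p ∈ P2 n, (if p = p₀ then (1:ℤ) else 0) := Finset.sum_le_sum key
    _ ≤ 1 := by
        rw [Finset.sum_ite_eq' (P2 n) p₀ (fun _ => (1:ℤ))]
        split <;> norm_num

end Pairs

section Main
variable {n : ℕ}

lemma lift_main [NeZero n] (hn2 : 2 ≤ n) (s : List (ZMod n × ZMod n)) :
    ∀ (g : Equiv.Perm (ZMod n)) (ℓ : ZMod n → ℤ),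
      (∀ e ∈ s, (cycleG n).Adj e.1 e.2) →
      (∀ t, ((ℓ t : ℤ) : ZMod n) = g t) →
      (∀ t, ((s.foldl stepL ℓ t : ℤ) : ZMod n) = applySwaps g s t)
      ∧ (∑ t, s.foldl stepL ℓ t = ∑ t, ℓ t)
      ∧ (∑ p ∈ P2 n, |flr n (s.foldl stepL ℓ) p - flr n ℓ p| ≤ (s.length : ℤ)) := by
  induction s with
  | nil =>
      intro g ℓ _ hc
      refine ⟨by simpa [applySwaps_nil] using hc, rfl, by simp⟩
  | cons e s ih =>
      intro g ℓ hadj hc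
      have he := hadj e List.mem_cons_self
      have hs : ∀ e' ∈ s, (cycleG n).Adj e'.1 e'.2 := fun e' h => hadj e' (List.mem_cons_of_mem _ h)
      obtain ⟨hne, -⟩ := (SimpleGraph.fromRel_adj _ _ _).1 he
      have hc' : ∀ t, ((stepL ℓ e t : ℤ) : ZMod n) = applySwaps g [e] t := by
        intro t
        rw [applySwaps_single_apply]
        exact stepL_cast he g ℓ hc t
      obtain ⟨ih1, ih2, ih3⟩ := ih (applySwaps g [e]) (stepL ℓ e) hs hc'
      have hfold : (e :: s).foldl stepL ℓ = s.foldl stepL (stepL ℓ e) := rfl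
      refine ⟨?_, ?_, ?_⟩
      · intro t
        rw [applySwaps_cons, hfold]
        exact ih1 t
      · rw [hfold, ih2]
        exact stepL_sum hne g ℓ hc
      · rw [hfold]
        calc ∑ p ∈ P2 n, |flr n (s.foldl stepL (stepL ℓ e)) p - flr n ℓ p|
            ≤ ∑ p ∈ P2 n, (|flr n (s.foldl stepL (stepL ℓ e)) p - flr n (stepL ℓ e) p|
                + |flr n (stepL ℓ e) p - flr n ℓ p|) := by
              apply Finset.sum_le_sum
              intro p _
              exact abs_sub_le _ _ _
          _ = (∑ p ∈ P2 n, |flr n (s.foldl stepL (stepL ℓ e)) p - flr n (stepL ℓ e) p|)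
                + ∑ p ∈ P2 n, |flr n (stepL ℓ e) p - flr n ℓ p| := Finset.sum_add_distrib
          _ ≤ (s.length : ℤ) + 1 := add_le_add ih3 (stepL_pairs hn2 he g ℓ hc)
          _ = ((e :: s).length : ℤ) := by simp [List.length_cons]

end Main

section Dyn
variable {n : ℕ}

lemma dynamics [NeZero n] (hn2 : 2 ≤ n) (π : Equiv.Perm (ZMod n))
    (s : List (ZMod n × ZMod n))
    (hadj : ∀ e ∈ s, (cycleG n).Adj e.1 e.2)
    (hsol : applySwaps (Equiv.refl (ZMod n)) s = π) :
    ∃ e : ZMod n → ℤ, (∑ v, e v = 0) ∧ (∀ v, ((e v : ℤ) : ZMod n) = π v - v) ∧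
      ((∑ p ∈ P2 n, |((p.1.val : ℤ) - (p.2.val : ℤ) + e p.1 - e p.2) / (n : ℤ)|) ≤ (s.length : ℤ)) := by
  set ℓ₀ : ZMod n → ℤ := fun t => (t.val : ℤ) with hℓ₀
  have hc : ∀ t, ((ℓ₀ t : ℤ) : ZMod n) = (Equiv.refl (ZMod n)) t := by
    intro t
    simp [hℓ₀, ZMod.natCast_val, ZMod.cast_id]
  obtain ⟨h1, h2, h3⟩ := lift_main hn2 s (Equiv.refl (ZMod n)) ℓ₀ hadj hc
  set L : ZMod n → ℤ := s.foldl stepL ℓ₀ with hL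
  refine ⟨fun v => L v - (v.val : ℤ), ?_, ?_, ?_⟩
  · rw [Finset.sum_sub_distrib]
    rw [h2]
    simp [hℓ₀]
  · intro v
    push_cast
    rw [h1 v, hsol]
    congr 1
    simp [ZMod.natCast_val, ZMod.cast_id]
  · have hflr0 : ∀ p ∈ P2 n, flr n ℓ₀ p = 0 := by
      intro p hp
      have hplt : p.2.val < p.1.val := (Finset.mem_filter.1 hp).2
      have hv : (p.1.val : ℤ) < (n : ℤ) := by exact_mod_cast ZMod.val_lt p.1
      unfold flr
      apply ediv_zero_of_lt
      · simp only [hℓ₀]; omega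
      · simp only [hℓ₀]; omega
    calc ∑ p ∈ P2 n, |((p.1.val : ℤ) - (p.2.val : ℤ) + (L p.1 - p.1.val) - (L p.2 - p.2.val)) / (n : ℤ)|
        = ∑ p ∈ P2 n, |flr n L p - flr n ℓ₀ p| := by
          apply Finset.sum_congr rfl
          intro p hp
          rw [hflr0 p hp, sub_zero]
          unfold flr
          congr 2
          ring
      _ ≤ (s.length : ℤ) := h3

end Dyn

section GapAux
variable {n c : ℕ}

/-- the special vertex (multiple of `c`) counterclockwise-nearest to `t` -/
def ggf (n c : ℕ) (t : ZMod n) : ZMod n := ((t.val / c * c : ℕ) : ZMod n)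

lemma ggf_val [NeZero n] (t : ZMod n) : (ggf n c t).val = t.val / c * c :=
  ZMod.val_cast_of_lt (lt_of_le_of_lt (Nat.div_mul_le_self _ _) (ZMod.val_lt t))

lemma ggf_dvd [NeZero n] (t : ZMod n) : c ∣ (ggf n c t).val := by
  rw [ggf_val]; exact dvd_mul_left c _

lemma ggf_lt [NeZero n] {t : ZMod n} (h : ¬ c ∣ t.val) : (ggf n c t).val < t.val := by
  rw [ggf_val]
  rcases lt_or_eq_of_le (Nat.div_mul_le_self t.val c) with h' | h'
  · exact h'
  · exact absurd ⟨t.val / c, by rw [mul_comm]; exact h'.symm⟩ h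

lemma ggf_gap [NeZero n] (hc0 : 0 < c) (t : ZMod n) : t.val - (ggf n c t).val < c := by
  rw [ggf_val]
  have h2 : t.val % c < c := Nat.mod_lt _ hc0
  have h1 : t.val = t.val % c + t.val / c * c := by
    rw [mul_comm (t.val / c) c]
    have h0 := Nat.div_add_mod t.val c
    omega
  rw [Nat.sub_eq_of_eq_add h1]
  exact h2

lemma ggf_unique [NeZero n] (hc0 : 0 < c) {t u : ZMod n} (hu : c ∣ u.val)
    (h1 : u.val < t.val) (h2 : t.val - u.val < c) : u = ggf n c t := by
  obtain ⟨k, hk⟩ := hu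
  have hdiv : t.val / c = k := by
    apply Nat.div_eq_of_lt_le
    · rw [mul_comm]; omega
    · have : (k + 1) * c = c * k + c := by ring
      omega
  apply ZMod.val_injective
  rw [ggf_val, hdiv, hk, mul_comm]

lemma card_specials {m : ℕ} [NeZero n] (hc : 0 < c) (hn : n = m * c) :
    (Finset.univ.filter (fun v : ZMod n => c ∣ v.val)).card = m := by
  have hset : Finset.univ.filter (fun v : ZMod n => c ∣ v.val)
      = (Finset.range m).image (fun i => ((i * c : ℕ) : ZMod n)) := by
    ext v
    simp only [Finset.mem_filter, Finset.mem_image, Finset.mem_range, Finset.mem_univ, true_and]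
    constructor
    · intro hv
      obtain ⟨k, hk⟩ := hv
      have hvn : v.val < n := ZMod.val_lt v
      refine ⟨k, ?_, ?_⟩
      · by_contra hkm
        push_neg at hkm
        have : m * c ≤ c * k := Nat.mul_le_mul_right c hkm |>.trans_eq (mul_comm k c)
        omega
      · have : ((v.val : ℕ) : ZMod n) = v := by
          rw [ZMod.natCast_val, ZMod.cast_id]
        rw [← this, hk, mul_comm]
    · rintro ⟨i, him, rfl⟩
      rw [ZMod.val_cast_of_lt (by rw [hn]; exact (Nat.mul_lt_mul_right (by omega : 0 < c)).mpr him)]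
      exact dvd_mul_left c i
  rw [hset, Finset.card_image_of_injOn, Finset.card_range]
  intro i hi j hj hij
  simp only [Finset.coe_range, Set.mem_Iio] at hi hj
  have hiv : i * c < n := by rw [hn]; exact (Nat.mul_lt_mul_right (by omega : 0 < c)).mpr hi
  have hjv : j * c < n := by rw [hn]; exact (Nat.mul_lt_mul_right (by omega : 0 < c)).mpr hj
  have := congrArg ZMod.val hij
  rw [ZMod.val_cast_of_lt hiv, ZMod.val_cast_of_lt hjv] at this
  exact Nat.eq_of_mul_eq_mul_right (by omega) this

end GapAux

section Theta
variable {n m c : ℕ}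

lemma ediv_zero_of_lt' {n D : ℤ} (h0 : 0 ≤ D) (h1 : D < n) : D / n = 0 :=
  Int.ediv_eq_zero_of_lt h0 h1

lemma ediv_neg_one' {n D : ℤ} (h0 : -n ≤ D) (h1 : D < 0) : D / n = -1 := by
  have hn : 0 < n := by linarith
  have h2 : (D + n) / n = D / n + 1 := by
    have := Int.add_mul_ediv_left D (1:ℤ) (ne_of_gt hn); simpa using this
  have z : (D + n) / n = 0 := Int.ediv_eq_zero_of_lt (by linarith) (by linarith)
  omega

lemma spec_val_le [NeZero n] (hm : 2 ≤ m) (hc : 2 ≤ c) (hn : n = m * c)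
    {v : ZMod n} (hv : c ∣ v.val) : v.val + c ≤ n := by
  obtain ⟨k, hk⟩ := hv
  have h1 : v.val < n := ZMod.val_lt v
  have hcm : c * m = m * c := mul_comm c m
  have hkm : k < m := by
    by_contra hh
    push_neg at hh
    have : c * m ≤ c * k := Nat.mul_le_mul_left c hh
    omega
  have h2 : c * (k + 1) ≤ c * m := Nat.mul_le_mul_left c hkm
  have h3 : c * (k + 1) = c * k + c := by ring
  omega

lemma theta_eq [NeZero n] (hm : 2 ≤ m) (hc : 2 ≤ c) (hn : n = m * c)
    (p : ZMod n × ZMod n) (hplt : p.2.val < p.1.val) :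
    ((p.1.val : ℤ) - (p.2.val : ℤ) + (if c ∣ p.1.val then (c:ℤ) else 0)
        - (if c ∣ p.2.val then (c:ℤ) else 0)) / (n : ℤ)
      = if ¬ c ∣ p.1.val ∧ p.2 = ggf n c p.1 then -1 else 0 := by
  have h1n : p.1.val < n := ZMod.val_lt p.1
  have hr0 : (p.2.val : ℤ) < (p.1.val : ℤ) := by exact_mod_cast hplt
  have hr1 : (1:ℤ) ≤ (p.1.val : ℤ) - (p.2.val : ℤ) := by omega
  have hrn : (p.1.val : ℤ) - (p.2.val : ℤ) < (n:ℤ) := by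
    have : (p.1.val : ℤ) < n := by exact_mod_cast h1n
    omega
  have hcn : (c : ℤ) ≤ (n : ℤ) := by
    have : c ≤ n := by rw [hn]; nlinarith
    exact_mod_cast this
  by_cases hs1 : c ∣ p.1.val <;> by_cases hs2 : c ∣ p.2.val
  · rw [if_pos hs1, if_pos hs2, if_neg (by tauto)]
    apply ediv_zero_of_lt' <;> omega
  · rw [if_pos hs1, if_neg hs2, if_neg (by tauto)]
    have hub : p.1.val + c ≤ n := spec_val_le hm hc hn hs1
    have hlb : 1 ≤ p.2.val := by
      rcases Nat.eq_zero_or_pos p.2.val with h | h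
      · exact absurd (h ▸ dvd_zero c) hs2
      · exact h
    have hub' : (p.1.val : ℤ) + c ≤ n := by exact_mod_cast hub
    have hlb' : (1:ℤ) ≤ (p.2.val : ℤ) := by exact_mod_cast hlb
    apply ediv_zero_of_lt' <;> omega
  · rw [if_neg hs1, if_pos hs2]
    by_cases hgap : p.2 = ggf n c p.1
    · rw [if_pos ⟨hs1, hgap⟩]
      have hgl : p.1.val - p.2.val < c := by
        rw [hgap]; exact ggf_gap (by omega) p.1
      have hgl' : (p.1.val : ℤ) - (p.2.val : ℤ) < c := by
        have : (p.1.val : ℤ) - (p.2.val : ℤ) = ((p.1.val - p.2.val : ℕ) : ℤ) := by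
          push_cast [Nat.cast_sub (le_of_lt hplt)]; ring
        rw [this]; exact_mod_cast hgl
      apply ediv_neg_one' <;> omega
    · rw [if_neg (by tauto)]
      have hge : c ≤ p.1.val - p.2.val := by
        by_contra hh
        push_neg at hh
        exact hgap (ggf_unique (by omega) hs2 hplt hh)
      have hge' : (c:ℤ) ≤ (p.1.val : ℤ) - (p.2.val : ℤ) := by
        have : (p.1.val : ℤ) - (p.2.val : ℤ) = ((p.1.val - p.2.val : ℕ) : ℤ) := by
          push_cast [Nat.cast_sub (le_of_lt hplt)]; ring
        rw [this]; exact_mod_cast hge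
      apply ediv_zero_of_lt' <;> omega
  · rw [if_neg hs1, if_neg hs2]
    have : p.2 ≠ ggf n c p.1 := fun h => hs2 (h ▸ ggf_dvd p.1)
    rw [if_neg (by tauto)]
    apply ediv_zero_of_lt' <;> omega

end Theta

section Key

set_option maxHeartbeats 1000000 in
theorem keyIneq (n m c : ℕ) [NeZero n] (hm : 2 ≤ m) (hc : 2 ≤ c) (hn : n = m * c)
    (e : ZMod n → ℤ)
    (hsum : ∑ v, e v = 0)
    (hspec : ∀ v : ZMod n, c ∣ v.val → (n:ℤ) ∣ (e v - c))
    (hord : ∀ v : ZMod n, ¬ c ∣ v.val → (n:ℤ) ∣ e v) :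
    (2 * n - m - 2 * c - 3 : ℤ) ≤
      ∑ p ∈ P2 n, |((p.1.val : ℤ) - (p.2.val : ℤ) + e p.1 - e p.2) / (n : ℤ)| := by
  classical
  have hnpos : 0 < n := by rw [hn]; exact Nat.mul_pos (by omega) (by omega)
  have hnZ : (0:ℤ) < (n:ℤ) := by exact_mod_cast hnpos
  have hn2c : 2 * c ≤ n := by rw [hn]; exact Nat.mul_le_mul_right c hm
  -- decomposition e = n * W + ρ
  have hWex : ∀ v : ZMod n, ∃ w : ℤ, e v = (n:ℤ) * w + (if c ∣ v.val then (c:ℤ) else 0) := by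
    intro v
    by_cases hv : c ∣ v.val
    · obtain ⟨w, hw⟩ := hspec v hv
      exact ⟨w, by rw [if_pos hv]; linarith⟩
    · obtain ⟨w, hw⟩ := hord v hv
      exact ⟨w, by rw [if_neg hv]; linarith⟩
  choose W hW using hWex
  have hcardZn : Fintype.card (ZMod n) = n := ZMod.card n
  set SP := Finset.univ.filter (fun v : ZMod n => c ∣ v.val) with hSP
  set O := Finset.univ.filter (fun v : ZMod n => ¬ c ∣ v.val) with hO
  have hSPcard : SP.card = m := card_specials (by omega) hn
  have hOcard : SP.card + O.card = n := by
    rw [hSP, hO, Finset.card_filter_add_card_filter_not, Finset.card_univ, hcardZn]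
  have hρsum : ∑ v : ZMod n, (if c ∣ v.val then (c:ℤ) else 0) = (n:ℤ) := by
    rw [← Finset.sum_filter, Finset.sum_const, ← hSP, hSPcard, nsmul_eq_mul]
    exact_mod_cast congrArg (Nat.cast : ℕ → ℤ) hn.symm
  have hWsum : ∑ v, W v = -1 := by
    have h1 : ∑ v, e v = ∑ v, ((n:ℤ) * W v + (if c ∣ v.val then (c:ℤ) else 0)) :=
      Finset.sum_congr rfl (fun v _ => hW v)
    rw [Finset.sum_add_distrib, ← Finset.mul_sum, hρsum, hsum] at h1
    have h2 : (n:ℤ) * (∑ v, W v + 1) = 0 := by linarith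
    rcases mul_eq_zero.mp h2 with h3 | h3
    · exact absurd h3 (ne_of_gt hnZ)
    · linarith
  -- normalize
  have hune : (Finset.univ : Finset (ZMod n)).Nonempty := Finset.univ_nonempty
  set μ := Finset.univ.inf' hune W with hμ
  set W' : ZMod n → ℤ := fun v => W v - μ with hW'
  have hW'0 : ∀ v, 0 ≤ W' v := fun v => sub_nonneg.mpr (Finset.inf'_le _ (Finset.mem_univ v))
  obtain ⟨v₀, -, hv₀⟩ := Finset.exists_mem_eq_inf' hune W
  have hv₀0 : W' v₀ = 0 := by rw [hW']; simp [hμ, ← hv₀]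
  have hμle : μ ≤ -1 := by
    by_contra hh
    push_neg at hh
    have hall : ∀ v : ZMod n, 0 ≤ W v := fun v =>
      le_trans (by omega) (Finset.inf'_le _ (Finset.mem_univ v))
    have : (0:ℤ) ≤ ∑ v, W v := Finset.sum_nonneg (fun v _ => hall v)
    omega
  set σ := ∑ v, W' v with hσdef
  have hσval : σ = -1 - (n:ℤ) * μ := by
    rw [hσdef, hW']
    rw [Finset.sum_sub_distrib, hWsum, Finset.sum_const, Finset.card_univ, hcardZn,
      nsmul_eq_mul]
    try ring
  have hσ1 : (n:ℤ) - 1 ≤ σ := by nlinarith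
  set Z := Finset.univ.filter (fun v : ZMod n => W' v = 0) with hZ
  set N2 := Finset.univ.filter (fun v : ZMod n => 2 ≤ W' v) with hN2
  have hzpos : 1 ≤ Z.card :=
    Finset.card_pos.mpr ⟨v₀, Finset.mem_filter.mpr ⟨Finset.mem_univ _, hv₀0⟩⟩
  have hZn : Z.card ≤ n := by
    calc Z.card ≤ Finset.univ.card := Finset.card_le_card (Finset.filter_subset _ _)
    _ = n := by rw [Finset.card_univ, hcardZn]
  have hσ2 : ((n : ℤ) - Z.card) + (N2.card : ℤ) ≤ σ := by
    have hpt : ∀ v : ZMod n,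
        (if ¬ W' v = 0 then (1:ℤ) else 0) + (if 2 ≤ W' v then (1:ℤ) else 0) ≤ W' v := by
      intro v
      have := hW'0 v
      split_ifs <;> omega
    have hsum2 : ∑ v, ((if ¬ W' v = 0 then (1:ℤ) else 0) + (if 2 ≤ W' v then (1:ℤ) else 0)) ≤ σ :=
      Finset.sum_le_sum (fun v _ => hpt v)
    rw [Finset.sum_add_distrib, Finset.sum_boole, Finset.sum_boole, ← hN2] at hsum2
    have hpart : Z.card + (Finset.univ.filter (fun v : ZMod n => ¬ W' v = 0)).card = n := by
      rw [hZ, Finset.card_filter_add_card_filter_not, Finset.card_univ, hcardZn]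
    omega
  -- gap sets
  set H := O.filter (fun t => W' (ggf n c t) < W' t) with hH
  set H0 := H.filter (fun t => W' (ggf n c t) = 0) with hH0
  set H1 := H.filter (fun t => ¬ W' (ggf n c t) = 0) with hH1
  have hHsplit : H0.card + H1.card = H.card := by
    rw [hH0, hH1, Finset.card_filter_add_card_filter_not]
  have hH1N2 : H1.card ≤ N2.card := by
    apply Finset.card_le_card
    intro t ht
    rw [hH1, Finset.mem_filter] at ht
    obtain ⟨htH, htne⟩ := ht
    rw [hH, Finset.mem_filter] at htH
    have h1 := hW'0 (ggf n c t)
    rw [hN2, Finset.mem_filter]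
    exact ⟨Finset.mem_univ _, by omega⟩
  have hH0Z : H0.card ≤ (c - 1) * Z.card := by
    have hmem : ∀ t ∈ H0, ¬ c ∣ t.val := by
      intro t ht
      rw [hH0, Finset.mem_filter] at ht
      have := ht.1
      rw [hH, Finset.mem_filter] at this
      have := this.1
      rw [hO, Finset.mem_filter] at this
      exact this.2
    have hfib : ∀ b ∈ H0.image (ggf n c),
        (H0.filter (fun a => ggf n c a = b)).card ≤ c - 1 := by
      intro b _
      have : (H0.filter (fun a => ggf n c a = b)).card ≤ (Finset.Ico (b.val + 1) (b.val + c)).card := by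
        apply Finset.card_le_card_of_injOn (fun t => t.val)
        · intro t ht
          rw [Finset.mem_coe, Finset.mem_filter] at ht
          obtain ⟨ht0, htb⟩ := ht
          have hnd := hmem t ht0
          have l1 : (ggf n c t).val < t.val := ggf_lt hnd
          have l2 : t.val - (ggf n c t).val < c := ggf_gap (by omega) t
          rw [htb] at l1 l2
          rw [Finset.mem_coe, Finset.mem_Ico]
          beta_reduce
          omega
        · intro x _ y _ hxy
          exact ZMod.val_injective n hxy
      rw [Nat.card_Ico] at this
      omega
    calc H0.card ≤ (c - 1) * (H0.image (ggf n c)).card :=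
          Finset.card_le_mul_card_image H0 (c-1) hfib
      _ ≤ (c - 1) * Z.card := by
          apply Nat.mul_le_mul_left
          apply Finset.card_le_card
          intro b hb
          rw [Finset.mem_image] at hb
          obtain ⟨t, ht, rfl⟩ := hb
          rw [hH0, Finset.mem_filter] at ht
          rw [hZ, Finset.mem_filter]
          exact ⟨Finset.mem_univ _, ht.2⟩
  -- pointwise bound
  have hterm : ∀ p ∈ P2 n,
      |W' p.1 - W' p.2| + (if (¬ c ∣ p.1.val ∧ p.2 = ggf n c p.1) then
          (if W' p.1 ≤ W' p.2 then (1:ℤ) else -1) else 0)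
        ≤ |((p.1.val : ℤ) - (p.2.val : ℤ) + e p.1 - e p.2) / (n : ℤ)| := by
    intro p hp
    have hplt : p.2.val < p.1.val := (Finset.mem_filter.1 hp).2
    have hnum : (p.1.val:ℤ) - (p.2.val:ℤ) + e p.1 - e p.2
        = ((p.1.val:ℤ) - (p.2.val:ℤ) + (if c ∣ p.1.val then (c:ℤ) else 0)
            - (if c ∣ p.2.val then (c:ℤ) else 0)) + (n:ℤ) * (W p.1 - W p.2) := by
      rw [hW p.1, hW p.2]
      ring
    rw [hnum, Int.add_mul_ediv_left _ _ (ne_of_gt hnZ), theta_eq hm hc hn p hplt]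
    have hWc : W p.1 - W p.2 = W' p.1 - W' p.2 := by rw [hW']; ring
    rw [hWc]
    by_cases hcond : (¬ c ∣ p.1.val ∧ p.2 = ggf n c p.1)
    · rw [if_pos hcond, if_pos hcond]
      rcases le_or_gt (W' p.1) (W' p.2) with hx | hx
      · rw [if_pos hx, abs_of_nonpos (by omega : W' p.1 - W' p.2 ≤ 0),
          abs_of_nonpos (by omega : (-1 : ℤ) + (W' p.1 - W' p.2) ≤ 0)]
        linarith
      · rw [if_neg (not_le.mpr hx), abs_of_nonneg (by omega : (0:ℤ) ≤ W' p.1 - W' p.2),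
          abs_of_nonneg (by omega : (0:ℤ) ≤ (-1 : ℤ) + (W' p.1 - W' p.2))]
        linarith
    · rw [if_neg hcond, if_neg hcond, add_zero, zero_add]
  have hmain : (∑ p ∈ P2 n, |W' p.1 - W' p.2|)
      + (∑ p ∈ P2 n, (if (¬ c ∣ p.1.val ∧ p.2 = ggf n c p.1) then
          (if W' p.1 ≤ W' p.2 then (1:ℤ) else -1) else 0))
      ≤ ∑ p ∈ P2 n, |((p.1.val : ℤ) - (p.2.val : ℤ) + e p.1 - e p.2) / (n : ℤ)| := by
    rw [← Finset.sum_add_distrib]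
    exact Finset.sum_le_sum hterm
  -- evaluate the D-sum over ordinaries
  have hDval : (∑ p ∈ P2 n, (if (¬ c ∣ p.1.val ∧ p.2 = ggf n c p.1) then
        (if W' p.1 ≤ W' p.2 then (1:ℤ) else -1) else 0))
      = ∑ t ∈ O, (if W' t ≤ W' (ggf n c t) then (1:ℤ) else -1) := by
    rw [← Finset.sum_filter]
    apply Finset.sum_nbij' (fun p => p.1) (fun t => (t, ggf n c t))
    · intro p hp
      rw [Finset.mem_filter] at hp
      rw [hO, Finset.mem_filter]
      exact ⟨Finset.mem_univ _, hp.2.1⟩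
    · intro t ht
      rw [hO, Finset.mem_filter] at ht
      rw [Finset.mem_filter]
      refine ⟨?_, ht.2, rfl⟩
      unfold P2
      rw [Finset.mem_filter]
      exact ⟨Finset.mem_univ _, ggf_lt ht.2⟩
    · intro p hp
      rw [Finset.mem_filter] at hp
      exact Prod.ext rfl hp.2.2.symm
    · intro t _
      rfl
    · intro p hp
      rw [Finset.mem_filter] at hp
      rw [hp.2.2]
  have hDbound : ((O.card : ℤ) - 2 * (H.card : ℤ))
      ≤ ∑ t ∈ O, (if W' t ≤ W' (ggf n c t) then (1:ℤ) else -1) := by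
    have hpt2 : ∀ t ∈ O, (1 : ℤ) - 2 * (if W' (ggf n c t) < W' t then (1:ℤ) else 0)
        ≤ (if W' t ≤ W' (ggf n c t) then (1:ℤ) else -1) := by
      intro t _
      split_ifs with h1 h2 h2 <;> omega
    calc ((O.card : ℤ) - 2 * (H.card : ℤ))
        = ∑ t ∈ O, ((1:ℤ) - 2 * (if W' (ggf n c t) < W' t then (1:ℤ) else 0)) := by
          rw [Finset.sum_sub_distrib, Finset.sum_const, ← Finset.mul_sum, Finset.sum_boole,
            ← hH, nsmul_eq_mul, mul_one]
      _ ≤ _ := Finset.sum_le_sum hpt2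
  -- P0 lower bound
  set Zc := Finset.univ.filter (fun v : ZMod n => ¬ W' v = 0) with hZc
  set ordp : ZMod n × ZMod n → ZMod n × ZMod n :=
    fun q => if q.2.val < q.1.val then q else (q.2, q.1) with hordp
  set F1 := (Z ×ˢ Zc).image ordp with hF1
  set F2 := H1.image (fun t => (t, ggf n c t)) with hF2
  have hZmem : ∀ v, v ∈ Z ↔ W' v = 0 := fun v => by
    rw [hZ, Finset.mem_filter]; simp
  have hZcmem : ∀ v, v ∈ Zc ↔ ¬ W' v = 0 := fun v => by
    rw [hZc, Finset.mem_filter]; simp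
  have hH1mem : ∀ t ∈ H1, (¬ c ∣ t.val) ∧ 1 ≤ W' (ggf n c t) ∧ W' (ggf n c t) < W' t := by
    intro t ht
    rw [hH1, Finset.mem_filter] at ht
    obtain ⟨htH, htne⟩ := ht
    rw [hH, Finset.mem_filter] at htH
    obtain ⟨htO, hlt⟩ := htH
    rw [hO, Finset.mem_filter] at htO
    have := hW'0 (ggf n c t)
    exact ⟨htO.2, by omega, hlt⟩
  have hinj1 : ∀ x ∈ Z ×ˢ Zc, ∀ y ∈ Z ×ˢ Zc, ordp x = ordp y → x = y := by
    intro x hx y hy hxy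
    rw [Finset.mem_product] at hx hy
    have hx1 : W' x.1 = 0 := (hZmem _).1 hx.1
    have hx2 : ¬ W' x.2 = 0 := (hZcmem _).1 hx.2
    have hy1 : W' y.1 = 0 := (hZmem _).1 hy.1
    have hy2 : ¬ W' y.2 = 0 := (hZcmem _).1 hy.2
    rw [hordp] at hxy
    simp only at hxy
    split_ifs at hxy with h1 h2 h2
    · exact hxy
    · have hA : x.1 = y.2 := congrArg Prod.fst hxy
      exact absurd (hA ▸ hx1) hy2
    · have hA : x.2 = y.1 := congrArg Prod.fst hxy
      exact absurd (hA.symm ▸ hy1) hx2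
    · have hA : x.2 = y.2 := congrArg Prod.fst hxy
      have hB : x.1 = y.1 := congrArg Prod.snd hxy
      exact Prod.ext hB hA
  have hinj2 : ∀ x ∈ H1, ∀ y ∈ H1, (x, ggf n c x) = (y, ggf n c y) → x = y := by
    intro x _ y _ h
    exact congrArg Prod.fst h
  have hF1sub : F1 ⊆ P2 n := by
    intro p hp
    rw [hF1, Finset.mem_image] at hp
    obtain ⟨q, hq, rfl⟩ := hp
    rw [Finset.mem_product] at hq
    have h1 : W' q.1 = 0 := (hZmem _).1 hq.1
    have h2 : ¬ W' q.2 = 0 := (hZcmem _).1 hq.2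
    have hne12 : q.1 ≠ q.2 := fun h => h2 (h ▸ h1)
    have hvalne : q.1.val ≠ q.2.val := fun h => hne12 (ZMod.val_injective n h)
    rw [hordp]
    simp only
    unfold P2
    split_ifs with hcmp
    · rw [Finset.mem_filter]; exact ⟨Finset.mem_univ _, hcmp⟩
    · rw [Finset.mem_filter]
      refine ⟨Finset.mem_univ _, ?_⟩
      simp only
      omega
  have hF2sub : F2 ⊆ P2 n := by
    intro p hp
    rw [hF2, Finset.mem_image] at hp
    obtain ⟨t, ht, rfl⟩ := hp
    obtain ⟨hnd, -, -⟩ := hH1mem t ht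
    unfold P2
    rw [Finset.mem_filter]
    exact ⟨Finset.mem_univ _, ggf_lt hnd⟩
  have hdisj : Disjoint F1 F2 := by
    rw [Finset.disjoint_left]
    intro p hp1 hp2
    rw [hF2, Finset.mem_image] at hp2
    obtain ⟨t, ht, hpt⟩ := hp2
    obtain ⟨-, hg1, hg2⟩ := hH1mem t ht
    have hp1' : W' p.1 = 0 ∨ W' p.2 = 0 := by
      rw [hF1, Finset.mem_image] at hp1
      obtain ⟨q, hq, rfl⟩ := hp1
      rw [Finset.mem_product] at hq
      have h1 : W' q.1 = 0 := (hZmem _).1 hq.1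
      rw [hordp]
      simp only
      split_ifs
      · exact Or.inl h1
      · exact Or.inr h1
    rw [← hpt] at hp1'
    simp only at hp1'
    rcases hp1' with h | h <;> omega
  have hZcsum : ∑ w ∈ Zc, W' w = σ := by
    have hpartsum : (∑ v ∈ Z, W' v) + (∑ v ∈ Zc, W' v) = σ := by
      rw [hσdef, hZ, hZc]
      exact Finset.sum_filter_add_sum_filter_not _ _ _
    have hZzero : ∑ v ∈ Z, W' v = 0 :=
      Finset.sum_eq_zero (fun v hv => (hZmem v).1 hv)
    omega
  have hF1sum : ∑ p ∈ F1, |W' p.1 - W' p.2| = (Z.card : ℤ) * σ := by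
    rw [hF1, Finset.sum_image hinj1]
    have hterm1 : ∀ q ∈ Z ×ˢ Zc, |W' (ordp q).1 - W' (ordp q).2| = W' q.2 := by
      intro q hq
      rw [Finset.mem_product] at hq
      have h1 : W' q.1 = 0 := (hZmem _).1 hq.1
      have h2 : 0 ≤ W' q.2 := hW'0 q.2
      rw [hordp]
      simp only
      split_ifs
      · rw [h1]; rw [abs_of_nonpos (by omega)]; ring
      · simp only
        rw [h1, sub_zero, abs_of_nonneg h2]
    rw [Finset.sum_congr rfl hterm1, Finset.sum_product]
    rw [Finset.sum_congr rfl (fun v _ => hZcsum), Finset.sum_const, nsmul_eq_mul]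
  have hF2sum : (H1.card : ℤ) ≤ ∑ p ∈ F2, |W' p.1 - W' p.2| := by
    rw [hF2, Finset.sum_image hinj2]
    calc (H1.card : ℤ) = ∑ t ∈ H1, (1:ℤ) := by
          rw [Finset.sum_const, nsmul_eq_mul, mul_one]
      _ ≤ _ := by
          apply Finset.sum_le_sum
          intro t ht
          obtain ⟨-, hg1, hg2⟩ := hH1mem t ht
          simp only
          rw [abs_of_nonneg (by omega)]
          omega
  have hP0 : (Z.card : ℤ) * σ + (H1.card : ℤ) ≤ ∑ p ∈ P2 n, |W' p.1 - W' p.2| := by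
    have hU : F1 ∪ F2 ⊆ P2 n := Finset.union_subset hF1sub hF2sub
    calc (Z.card : ℤ) * σ + (H1.card : ℤ)
        ≤ (∑ p ∈ F1, |W' p.1 - W' p.2|) + ∑ p ∈ F2, |W' p.1 - W' p.2| := by
          rw [hF1sum]; exact add_le_add_right hF2sum _
      _ = ∑ p ∈ F1 ∪ F2, |W' p.1 - W' p.2| := (Finset.sum_union hdisj).symm
      _ ≤ ∑ p ∈ P2 n, |W' p.1 - W' p.2| :=
          Finset.sum_le_sum_of_subset_of_nonneg hU (fun p _ _ => abs_nonneg _)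
  -- final arithmetic
  have hOcZ : (O.card : ℤ) = (n:ℤ) - (m:ℤ) := by omega
  have hH0' : (H0.card : ℤ) ≤ ((c:ℤ) - 1) * (Z.card : ℤ) := by
    have : ((H0.card : ℕ) : ℤ) ≤ (((c - 1) * Z.card : ℕ) : ℤ) := by exact_mod_cast hH0Z
    calc (H0.card : ℤ) ≤ (((c - 1) * Z.card : ℕ) : ℤ) := this
      _ = ((c:ℤ) - 1) * (Z.card : ℤ) := by
          push_cast [Nat.cast_sub (by omega : 1 ≤ c)]
          ring
  have hzZ : (1:ℤ) ≤ (Z.card : ℤ) := by exact_mod_cast hzpos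
  have hn2cZ : 2 * (c:ℤ) ≤ (n:ℤ) := by exact_mod_cast hn2c
  have hH1Z : (H1.card : ℤ) ≤ (N2.card : ℤ) := by exact_mod_cast hH1N2
  have hHZ : (H0.card : ℤ) + (H1.card : ℤ) = (H.card : ℤ) := by exact_mod_cast hHsplit
  have e1 : 0 ≤ ((Z.card:ℤ) - 1) * (σ - ((n:ℤ) - 1)) :=
    mul_nonneg (by omega) (by omega)
  have e2 : 0 ≤ ((Z.card:ℤ) - 1) * (((n:ℤ) - 1) - (2*(c:ℤ) - 1)) :=
    mul_nonneg (by omega) (by omega)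
  have r1 : (Z.card:ℤ)*σ = ((Z.card:ℤ)-1)*(σ-((n:ℤ)-1))
      + ((Z.card:ℤ)-1)*(((n:ℤ)-1)-(2*(c:ℤ)-1))
      + ((Z.card:ℤ)-1)*(2*(c:ℤ)-1) + σ := by ring
  have r2 : ((Z.card:ℤ)-1)*(2*(c:ℤ)-1) - 2*(((c:ℤ)-1)*(Z.card:ℤ))
      = (Z.card:ℤ) - 2*(c:ℤ) + 1 := by ring
  have hfinal : (2 * (n:ℤ) - m - 2*c - 3)
      ≤ (Z.card : ℤ) * σ + (H1.card : ℤ) + ((O.card : ℤ) - 2 * (H.card : ℤ)) := by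
    linarith [e1, e2, r1, r2, hσ1, hσ2, hH0', hH1Z, hHZ, hOcZ, hzZ, hn2cZ]
  calc (2 * (n:ℤ) - m - 2*c - 3)
      ≤ (Z.card : ℤ) * σ + (H1.card : ℤ) + ((O.card : ℤ) - 2 * (H.card : ℤ)) := hfinal
    _ ≤ (∑ p ∈ P2 n, |W' p.1 - W' p.2|)
        + (∑ p ∈ P2 n, (if (¬ c ∣ p.1.val ∧ p.2 = ggf n c p.1) then
            (if W' p.1 ≤ W' p.2 then (1:ℤ) else -1) else 0)) := by
        rw [hDval]
        exact add_le_add hP0 hDbound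
    _ ≤ _ := hmain

end Key

/-- On a cycle of length `p(q-1)` with `p/2 = m` special vertices spaced
`2q-2` apart, each carrying a token whose target is the next special vertex
`2q-2` steps clockwise and every other token fixed, any solving swap sequence
(along edges of this cycle) has length greater than `2pq − 5p/2 − 4q`. -/
theorem stmt14 (p q m : ℕ) (hm : p = 2 * m) (hp : 2 ≤ p) (hq : 2 ≤ q)
    (π : Equiv.Perm (ZMod (p * (q - 1))))
    (hπ1 : ∀ i < m, π ((i * (2 * q - 2) : ℕ) : ZMod (p * (q - 1))) =
      (((i + 1) * (2 * q - 2) : ℕ) : ZMod (p * (q - 1))))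
    (hπ2 : ∀ v : ZMod (p * (q - 1)),
      (∀ i < m, v ≠ ((i * (2 * q - 2) : ℕ) : ZMod (p * (q - 1)))) → π v = v)
    (s : List (ZMod (p * (q - 1)) × ZMod (p * (q - 1))))
    (hadj : ∀ e ∈ s, (cycleG (p * (q - 1))).Adj e.1 e.2)
    (hsol : applySwaps (Equiv.refl (ZMod (p * (q - 1)))) s = π) :
    2 * (p : ℝ) * q - 5 * p / 2 - 4 * q < (s.length : ℝ) := by
  classical
  have hm1 : 1 ≤ m := by omega
  haveI : NeZero (p * (q - 1)) := ⟨Nat.mul_ne_zero (by omega) (by omega)⟩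
  rcases Nat.lt_or_ge m 2 with hm2 | hm2
  · -- trivial case p = 2
    have hp2 : p = 2 := by omega
    have hpR : (p : ℝ) = 2 := by rw [hp2]; norm_num
    have hconst : 2 * (p : ℝ) * q - 5 * p / 2 - 4 * q = -5 := by rw [hpR]; ring
    rw [hconst]
    have : (0:ℝ) ≤ (s.length : ℝ) := by positivity
    linarith
  · -- main case
    have hq1 : 1 ≤ q - 1 := by omega
    have hn2 : 2 ≤ p * (q - 1) := by
      calc 2 ≤ p * 1 := by omega
      _ ≤ p * (q - 1) := Nat.mul_le_mul_left p hq1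
    have hc2 : 2 ≤ 2 * q - 2 := by omega
    have hmc : p * (q - 1) = m * (2 * q - 2) := by
      have h1 : 2 * q - 2 = 2 * (q - 1) := by omega
      rw [h1, hm]
      ring
    have hc0 : 0 < 2 * q - 2 := by omega
    obtain ⟨e, hesum, hecast, hbound⟩ := dynamics hn2 π s hadj hsol
    have hspecd : ∀ v : ZMod (p * (q - 1)), (2 * q - 2) ∣ v.val →
        ((p * (q - 1) : ℕ) : ℤ) ∣ (e v - (2 * q - 2 : ℕ)) := by
      intro v hv
      have hvlt : v.val < p * (q - 1) := ZMod.val_lt v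
      set i := v.val / (2 * q - 2) with hi
      have hic : i * (2 * q - 2) = v.val := Nat.div_mul_cancel hv
      have him : i < m := by
        by_contra hh
        push_neg at hh
        have h2 : m * (2 * q - 2) ≤ i * (2 * q - 2) := Nat.mul_le_mul_right _ hh
        omega
      have hicn : i * (2 * q - 2) < p * (q - 1) := by omega
      have hvrep : v = ((i * (2 * q - 2) : ℕ) : ZMod (p * (q - 1))) := by
        apply ZMod.val_injective
        rw [ZMod.val_cast_of_lt hicn, hic]
      have hπv : π v = (((i + 1) * (2 * q - 2) : ℕ) : ZMod (p * (q - 1))) := by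
        rw [hvrep]
        exact hπ1 i him
      have h2 : ((e v - (2 * q - 2 : ℕ) : ℤ) : ZMod (p * (q - 1))) = 0 := by
        push_cast
        rw [hecast v, hπv]
        rw [hvrep]
        push_cast
        ring
      exact_mod_cast (ZMod.intCast_zmod_eq_zero_iff_dvd _ _).1 h2
    have hordd : ∀ v : ZMod (p * (q - 1)), ¬ (2 * q - 2) ∣ v.val →
        ((p * (q - 1) : ℕ) : ℤ) ∣ e v := by
      intro v hv
      have hπv : π v = v := by
        apply hπ2
        intro i him hvi
        apply hv
        have hicn : i * (2 * q - 2) < p * (q - 1) := by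
          have := (Nat.mul_lt_mul_right hc0).mpr him
          omega
        rw [hvi, ZMod.val_cast_of_lt hicn]
        exact dvd_mul_left (2 * q - 2) i
      have h2 : ((e v : ℤ) : ZMod (p * (q - 1))) = 0 := by
        rw [hecast v, hπv]
        ring
      exact_mod_cast (ZMod.intCast_zmod_eq_zero_iff_dvd _ _).1 h2
    have hkey := keyIneq (p * (q - 1)) m (2 * q - 2) hm2 hc2 hmc e hesum hspecd hordd
    have hfin : (2 * ((p * (q - 1) : ℕ) : ℤ) - m - 2 * ((2 * q - 2 : ℕ) : ℤ) - 3 : ℤ)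
        ≤ (s.length : ℤ) := by
      calc (2 * ((p * (q - 1) : ℕ) : ℤ) - m - 2 * ((2 * q - 2 : ℕ) : ℤ) - 3 : ℤ)
          ≤ ∑ pr ∈ P2 (p * (q - 1)),
              |((pr.1.val : ℤ) - (pr.2.val : ℤ) + e pr.1 - e pr.2) / ((p * (q - 1) : ℕ) : ℤ)| := by
            exact_mod_cast hkey
        _ ≤ (s.length : ℤ) := hbound
    have hfinR : (2 * ((p * (q - 1) : ℕ) : ℝ) - m - 2 * ((2 * q - 2 : ℕ) : ℝ) - 3 : ℝ)
        ≤ (s.length : ℝ) := by exact_mod_cast hfin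
    have hcast1 : ((p * (q - 1) : ℕ) : ℝ) = (p : ℝ) * ((q : ℝ) - 1) := by
      push_cast [Nat.cast_sub (by omega : 1 ≤ q)]
      ring
    have hcast2 : ((2 * q - 2 : ℕ) : ℝ) = 2 * (q : ℝ) - 2 := by
      push_cast [Nat.cast_sub (by omega : 2 ≤ 2 * q)]
      ring
    have hpm : (p : ℝ) = 2 * (m : ℝ) := by exact_mod_cast congrArg (Nat.cast : ℕ → ℝ) hm
    rw [hcast1, hcast2] at hfinR
    have hLHS : 2 * (p : ℝ) * q - 5 * p / 2 - 4 * q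
        = (2 * ((p:ℝ) * ((q:ℝ) - 1)) - m - 2 * (2 * (q:ℝ) - 2) - 3) - 1 := by
      rw [hpm]
      ring
    rw [hLHS]
    linarith
end
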